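/- arXiv:1809.07816 — 3 statements merged into one kernel-verified Lean document; each statement's English description precedes it below -/
import Mathlib

section
/- Let n ≥ 1 and suppose φ : Y → Y satisfies: for each e ∈ {f_2,…,f_n, g} and each 𝐮 ∈ Y all of whose coordinates lie in dom e, all coordinates of φ(𝐮) lie in dom e and φ(e·𝐮) = e·φ(𝐮) (coordinatewise action); and for each m with 1 ≤ m ≤ n−1, whenever 𝐮, 𝐯 ∈ Y satisfy u_i ≈_m v_i for all i, the tuples φ(𝐮) and φ(𝐯) satisfy φ(𝐮)_i ≈_m φ(𝐯)_i for all i. If (1,2,…,n) lies in the image of φ, then φ is the identity map on Y. -/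
/-- Sugihara implication on the integers. -/
def SImp (a b : ℤ) : ℤ := if a ≤ b then max (-a) b else min (-a) b

/-- The universe of the Sugihara algebra `Z_{2n+1}`. -/
def Zodd (n : ℕ) : Set ℤ := {a : ℤ | -(n : ℤ) ≤ a ∧ a ≤ (n : ℤ)}

/-- The universe of the Sugihara algebra `Z_{2n}`. -/
def Zeven (n : ℕ) : Set ℤ := {a : ℤ | (-(n : ℤ) ≤ a ∧ a ≤ (n : ℤ)) ∧ a ≠ 0}

/-- The relation `≈_m`. -/
def eqm (m : ℕ) (a b : ℤ) : Prop := a = b ∨ (|a| ≤ (m : ℤ) ∧ |b| ≤ (m : ℤ))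

/-- The underlying function of the partial endomorphism `g` of `Z_{2n}`. -/
def gEFun (a : ℤ) : ℤ := if 0 < a then a - 1 else a + 1

/-- The underlying function of the partial endomorphism `f_i` of `Z_{2n}` (for `2 ≤ i ≤ n`). -/
def fEFun (i : ℕ) (a : ℤ) : ℤ :=
  if a = (i : ℤ) - 1 then (i : ℤ) else if a = -((i : ℤ) - 1) then -(i : ℤ) else a

/-- The maps `f_2, …, f_n, g` on `Z_{2n}`, as pairs (domain, function). -/
def MapsEven (n : ℕ) : Set (Set ℤ × (ℤ → ℤ)) :=
  {e | (∃ i : ℕ, 2 ≤ i ∧ i ≤ n ∧ e = (Zeven n \ {(i : ℤ), -(i : ℤ)}, fEFun i)) ∨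
    e = (Zeven n \ {1, -1}, gEFun)}

/-- The test space `Y` for the even case, as a set of `n`-tuples. -/
def YEven (n : ℕ) : Set (Fin n → ℤ) :=
  {u | (∀ i, u i ∈ Zeven n) ∧
    ∃ j : Fin n, 0 < u j ∧ (∀ i, i ≤ j → u i = u j) ∧
      ∀ k l : Fin n, j ≤ k → k < l → u k < u l}

/-- The tuples `𝐛_1, …, 𝐛_n` in `Y` (even case); here `1 ≤ k ≤ n`. -/
def bEven (n k : ℕ) : Fin n → ℤ :=
  fun p => max 1 (((p : ℕ) : ℤ) + 1 - ((n : ℤ) - (k : ℤ)))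

namespace S17

variable {n : ℕ}

/-- witness structure for membership in `YEven`. -/
def Wit (u : Fin n → ℤ) (j : Fin n) : Prop :=
  (∀ p, p ≤ j → u p = u j) ∧ (∀ p q : Fin n, j ≤ p → p < q → u p < u q)

lemma memY (u : Fin n → ℤ) (j : Fin n) (h1 : ∀ p, 1 ≤ u p) (h2 : ∀ p, u p ≤ (n:ℤ))
    (hw : Wit u j) : u ∈ YEven n := by
  refine ⟨fun i => ⟨⟨by have := h1 i; have : (0:ℤ) ≤ n := Int.natCast_nonneg n; omega, h2 i⟩,
    by have := h1 i; omega⟩, j, by have := h1 j; omega, hw.1, hw.2⟩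

lemma Ypos {u : Fin n → ℤ} (hu : u ∈ YEven n) : ∀ p, 1 ≤ u p := by
  obtain ⟨hz, j, hj, h3, h4⟩ := hu
  intro p
  rcases le_or_gt p j with h | h
  · rw [h3 p h]; omega
  · have := h4 j p le_rfl h; omega

lemma Ylen {u : Fin n → ℤ} (hu : u ∈ YEven n) : ∀ p, u p ≤ (n:ℤ) :=
  fun p => (hu.1 p).1.2

lemma Ymono {u : Fin n → ℤ} (hu : u ∈ YEven n) {p q : Fin n} (h : p ≤ q) : u p ≤ u q := by
  obtain ⟨hz, j, hj, h3, h4⟩ := hu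
  rcases le_or_gt q j with hq | hq
  · rw [h3 p (le_trans h hq), h3 q hq]
  · rcases le_or_gt p j with hp | hp
    · rw [h3 p hp]; exact le_of_lt (h4 j q le_rfl hq)
    · rcases eq_or_lt_of_le h with rfl | hlt
      · exact le_rfl
      · exact le_of_lt (h4 p q (le_of_lt hp) hlt)

lemma Yprefix {u : Fin n → ℤ} {j : Fin n} (hw : Wit u j) {p q : Fin n} (hpq : p < q)
    (he : u p = u q) : q ≤ j := by
  by_contra hc
  push_neg at hc
  rcases le_or_gt p j with hp | hp
  · have h1 := hw.1 p hp
    have h2 := hw.2 j q le_rfl hc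
    omega
  · have := hw.2 p q (le_of_lt hp) hpq; omega

lemma Ygap {u : Fin n → ℤ} {j : Fin n} (hw : Wit u j) :
    ∀ d : ℕ, ∀ p q : Fin n, j ≤ p → (q:ℕ) = (p:ℕ) + d → u p + d ≤ u q := by
  intro d
  induction d with
  | zero =>
    intro p q _ hq
    have : p = q := Fin.ext (by omega)
    subst this; simp
  | succ d ih =>
    intro p q hjp hq
    have hlt : (p:ℕ) + d < n := by have := q.isLt; omega
    have h1 := ih p ⟨(p:ℕ)+d, hlt⟩ hjp rfl
    have h2 : u ⟨(p:ℕ)+d, hlt⟩ < u q := by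
      refine hw.2 _ _ ?_ ?_
      · have : (j:ℕ) ≤ (p:ℕ) := hjp
        show ((j:ℕ) ≤ ((⟨(p:ℕ)+d, hlt⟩ : Fin n) : ℕ)); simp; omega
      · show (((⟨(p:ℕ)+d, hlt⟩ : Fin n) : ℕ) < (q:ℕ)); simp; omega
    push_cast
    push_cast at h1
    omega


/-- the canonical family: constant `A` then increasing, shifted by `C`. -/
def shape (n : ℕ) (A C : ℤ) : Fin n → ℤ := fun p => max A (((p:ℕ):ℤ) + 1 - C)

lemma shape_wit (hn : 1 ≤ n) (A C : ℤ) (hA : 1 ≤ A) (hC : 0 ≤ C) :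
    ∃ j : Fin n, Wit (shape n A C) j ∧ ((j:ℕ):ℤ) = min (A + C - 1) ((n:ℤ) - 1) := by
  have hn' : (1:ℤ) ≤ n := by exact_mod_cast hn
  have hjlt : (min (A + C - 1) ((n:ℤ) - 1)).toNat < n := by omega
  refine ⟨⟨_, hjlt⟩, ?_⟩
  set j : Fin n := ⟨(min (A + C - 1) ((n:ℤ) - 1)).toNat, hjlt⟩ with hj
  have hjv : ((j:ℕ):ℤ) = min (A + C - 1) ((n:ℤ) - 1) := by
    rw [hj]; simp only [Fin.val_mk]; omega
  refine ⟨⟨?_, ?_⟩, hjv⟩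
  · intro p hp
    have hp' : ((p:ℕ):ℤ) ≤ ((j:ℕ):ℤ) := by exact_mod_cast (Fin.le_def.mp hp)
    show max A (((p:ℕ):ℤ) + 1 - C) = max A (((j:ℕ):ℤ) + 1 - C)
    omega
  · intro p q hp hq
    have hp' : ((j:ℕ):ℤ) ≤ ((p:ℕ):ℤ) := by exact_mod_cast (Fin.le_def.mp hp)
    have hq' : ((p:ℕ):ℤ) < ((q:ℕ):ℤ) := by exact_mod_cast (Fin.lt_def.mp hq)
    have hqn : ((q:ℕ):ℤ) ≤ (n:ℤ) - 1 := by have := q.isLt; omega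
    show max A (((p:ℕ):ℤ) + 1 - C) < max A (((q:ℕ):ℤ) + 1 - C)
    omega

lemma shape_mem (hn : 1 ≤ n) (A C : ℤ) (hA : 1 ≤ A) (hC : 0 ≤ C) (hAn : A ≤ (n:ℤ)) :
    shape n A C ∈ YEven n := by
  obtain ⟨j, hw, _⟩ := shape_wit hn A C hA hC
  refine memY _ j (fun p => le_max_left _ _ |>.trans' (by omega)) (fun p => ?_) hw
  have := p.isLt
  have : ((p:ℕ):ℤ) ≤ (n:ℤ) - 1 := by omega
  show max A _ ≤ _
  omega

lemma fE_eq (i : ℕ) (hi : 2 ≤ i) (z : ℤ) (hz : 1 ≤ z) :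
    fEFun i z = if z = (i:ℤ) - 1 then (i:ℤ) else z := by
  have hi' : (2:ℤ) ≤ i := by exact_mod_cast hi
  unfold fEFun
  by_cases h : z = (i:ℤ) - 1
  · simp [h]
  · rw [if_neg h, if_neg (by omega), if_neg h]

lemma fE_lt (i : ℕ) (hi : 2 ≤ i) {z1 z2 : ℤ} (hz1 : 1 ≤ z1) (hz2 : 1 ≤ z2)
    (h1 : z1 ≠ (i:ℤ)) (h2 : z2 ≠ (i:ℤ)) (h : z1 < z2) : fEFun i z1 < fEFun i z2 := by
  have hi' : (2:ℤ) ≤ i := by exact_mod_cast hi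
  rw [fE_eq i hi z1 hz1, fE_eq i hi z2 hz2]
  split_ifs <;> omega

lemma fE_inj (i : ℕ) (hi : 2 ≤ i) {z1 z2 : ℤ} (hz1 : 1 ≤ z1) (hz2 : 1 ≤ z2)
    (h1 : z1 ≠ (i:ℤ)) (h2 : z2 ≠ (i:ℤ)) (he : fEFun i z1 = fEFun i z2) : z1 = z2 := by
  have hi' : (2:ℤ) ≤ i := by exact_mod_cast hi
  rw [fE_eq i hi z1 hz1, fE_eq i hi z2 hz2] at he
  split_ifs at he <;> omega


section Phi

variable (φ : (Fin n → ℤ) → (Fin n → ℤ))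
variable (hmap : ∀ u ∈ YEven n, φ u ∈ YEven n)
variable (hpres : ∀ e ∈ MapsEven n, ∀ u ∈ YEven n, (∀ p, u p ∈ e.1) →
      (∀ p, φ u p ∈ e.1) ∧ φ (fun p => e.2 (u p)) = fun p => e.2 (φ u p))

include hmap hpres

lemma gstep (u : Fin n → ℤ) (hu : u ∈ YEven n) (h2 : ∀ p, 2 ≤ u p) :
    (∀ p, 2 ≤ φ u p) ∧ φ (fun p => u p - 1) = fun p => φ u p - 1 := by
  have he : (Zeven n \ {1, -1}, gEFun) ∈ MapsEven n := Or.inr rfl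
  have hdom : ∀ p, u p ∈ (Zeven n \ ({1, -1} : Set ℤ)) := by
    intro p
    refine ⟨(hu.1 p), ?_⟩
    simp only [Set.mem_insert_iff, Set.mem_singleton_iff]
    push_neg
    constructor <;> [skip; skip] <;> have := h2 p <;> omega
  obtain ⟨hd, heq⟩ := hpres _ he u hu hdom
  have hφ2 : ∀ p, 2 ≤ φ u p := by
    intro p
    have h1 := Ypos (hmap u hu) p
    have h2 := (hd p).2
    simp only [Set.mem_insert_iff, Set.mem_singleton_iff] at h2
    push_neg at h2
    omega
  refine ⟨hφ2, ?_⟩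
  have e1 : (fun p => gEFun (u p)) = fun p => u p - 1 := by
    funext p; unfold gEFun; rw [if_pos (by have := h2 p; omega)]
  have e2 : (fun p => gEFun (φ u p)) = fun p => φ u p - 1 := by
    funext p; unfold gEFun; rw [if_pos (by have := hφ2 p; omega)]
  calc φ (fun p => u p - 1) = φ (fun p => gEFun (u p)) := by rw [e1]
    _ = fun p => gEFun (φ u p) := heq
    _ = fun p => φ u p - 1 := e2

lemma fstep (i : ℕ) (hi2 : 2 ≤ i) (hin : i ≤ n) (u : Fin n → ℤ) (hu : u ∈ YEven n)
    (hav : ∀ p, u p ≠ (i:ℤ)) :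
    (∀ p, φ u p ≠ (i:ℤ)) ∧ φ (fun p => fEFun i (u p)) = fun p => fEFun i (φ u p) := by
  have hi' : (2:ℤ) ≤ i := by exact_mod_cast hi2
  have he : (Zeven n \ {(i:ℤ), -(i:ℤ)}, fEFun i) ∈ MapsEven n := Or.inl ⟨i, hi2, hin, rfl⟩
  have hdom : ∀ p, u p ∈ (Zeven n \ ({(i:ℤ), -(i:ℤ)} : Set ℤ)) := by
    intro p
    refine ⟨(hu.1 p), ?_⟩
    simp only [Set.mem_insert_iff, Set.mem_singleton_iff]
    push_neg
    have := Ypos hu p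
    exact ⟨hav p, by omega⟩
  obtain ⟨hd, heq⟩ := hpres _ he u hu hdom
  refine ⟨fun p => ?_, heq⟩
  have h2 := (hd p).2
  simp only [Set.mem_insert_iff, Set.mem_singleton_iff] at h2
  push_neg at h2
  exact h2.1

lemma avoid (s : ℤ) (hs1 : 1 ≤ s) (hsn : s ≤ (n:ℤ)) (u : Fin n → ℤ) (hu : u ∈ YEven n)
    (hav : ∀ p, u p ≠ s) : ∀ p, φ u p ≠ s := by
  rcases eq_or_lt_of_le hs1 with h1 | h2
  · -- s = 1, use g
    have he : (Zeven n \ {1, -1}, gEFun) ∈ MapsEven n := Or.inr rfl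
    have hdom : ∀ p, u p ∈ (Zeven n \ ({1, -1} : Set ℤ)) := by
      intro p
      refine ⟨(hu.1 p), ?_⟩
      simp only [Set.mem_insert_iff, Set.mem_singleton_iff]
      push_neg
      have := Ypos hu p
      have := hav p
      omega
    obtain ⟨hd, _⟩ := hpres _ he u hu hdom
    intro p
    have h2 := (hd p).2
    simp only [Set.mem_insert_iff, Set.mem_singleton_iff] at h2
    push_neg at h2
    omega
  · have h2i : 2 ≤ s.toNat := by omega
    have hin : s.toNat ≤ n := by omega
    have hcast : ((s.toNat : ℕ) : ℤ) = s := by omega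
    have := (fstep φ hmap hpres s.toNat h2i hin u hu (by rw [hcast]; exact hav)).1
    rw [hcast] at this
    exact this

lemma val_le (u : Fin n → ℤ) (hu : u ∈ YEven n) (k : ℤ) (hk1 : 1 ≤ k)
    (hk : ∀ p, u p ≤ k) : ∀ p, φ u p ≤ k := by
  intro p
  by_contra hc
  push_neg at hc
  have h1 := Ypos (hmap u hu) p
  have h2 := Ylen (hmap u hu) p
  exact avoid φ hmap hpres (φ u p) (by omega) h2 u hu (fun q => by have := hk q; omega) p rfl

end Phi

lemma allvals (hn : 1 ≤ n) (u : Fin n → ℤ) (hu : u ∈ YEven n)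
    (hall : ∀ s : ℤ, 1 ≤ s → s ≤ (n:ℤ) → ∃ p : Fin n, u p = s) :
    ∀ p : Fin n, u p = ((p:ℕ):ℤ) + 1 := by
  have hn' : (1:ℤ) ≤ n := by exact_mod_cast hn
  -- A : upward
  have A : ∀ s : ℕ, 1 ≤ s → s ≤ n → ∃ q : Fin n, u q = (s:ℤ) ∧ (s:ℤ) ≤ ((q:ℕ):ℤ) + 1 := by
    intro s
    induction s with
    | zero => omega
    | succ s ih =>
      intro _ hsn
      rcases Nat.eq_or_lt_of_le (show 1 ≤ s + 1 from by omega) with h1 | h1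
      · obtain ⟨q, hq⟩ := hall 1 le_rfl hn'
        exact ⟨q, by rw [hq]; push_cast; omega, by have := q.isLt; push_cast; omega⟩
      · obtain ⟨q, hq, hq2⟩ := ih (by omega) (by omega)
        obtain ⟨r, hr⟩ := hall ((s:ℤ)+1) (by push_cast; omega) (by push_cast; omega)
        have hqr : q < r := by
          by_contra hc
          push_neg at hc
          have := Ymono hu hc
          omega
        have : ((q:ℕ):ℤ) < ((r:ℕ):ℤ) := by exact_mod_cast (Fin.lt_def.mp hqr)
        exact ⟨r, by rw [hr]; push_cast; ring, by push_cast; omega⟩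
  -- B : downward
  have B : ∀ d : ℕ, ∀ s : ℕ, s = n - d → 1 ≤ s → ∃ q : Fin n, u q = (s:ℤ) ∧ ((q:ℕ):ℤ) ≤ (s:ℤ) - 1 := by
    intro d
    induction d with
    | zero =>
      intro s hs hs1
      obtain ⟨q, hq, hq2⟩ := A n hn le_rfl
      have : (q:ℕ) = n - 1 := by have := q.isLt; omega
      exact ⟨q, by rw [hq]; congr 1; omega, by subst hs; push_cast; omega⟩
    | succ d ih =>
      intro s hs hs1
      have hdn : d < n := by omega
      obtain ⟨q', hq', hq2'⟩ := ih (n - d) (rfl) (by omega)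
      obtain ⟨r, hr⟩ := hall (s:ℤ) (by push_cast; omega) (by push_cast; omega)
      have hrq : r < q' := by
        by_contra hc
        push_neg at hc
        have := Ymono hu hc
        have : ((n:ℤ) - d) ≤ (s:ℤ) := by omega
        push_cast at this
        omega
      have : ((r:ℕ):ℤ) < ((q':ℕ):ℤ) := by exact_mod_cast (Fin.lt_def.mp hrq)
      have hnd : ((n - d : ℕ):ℤ) = (n:ℤ) - d := by omega
      exact ⟨r, hr, by push_cast; omega⟩
  intro p
  have hp1 : (p:ℕ) + 1 ≤ n := p.isLt
  obtain ⟨q, hq, hq2⟩ := A ((p:ℕ) + 1) (by omega) hp1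
  obtain ⟨q', hq', hq2'⟩ := B (n - ((p:ℕ)+1)) ((p:ℕ)+1) (by omega) (by omega)
  have hpq : p ≤ q := by
    rw [Fin.le_def]
    push_cast at hq2
    omega
  have hpq' : q' ≤ p := by
    rw [Fin.le_def]
    push_cast at hq2'
    omega
  have m1 := Ymono hu hpq
  have m2 := Ymono hu hpq'
  push_cast at hq hq' ⊢
  omega


lemma eqm_iff (m : ℕ) (a b : ℤ) :
    eqm m a b ↔ (a = b ∨ (-(m:ℤ) ≤ a ∧ a ≤ m ∧ -(m:ℤ) ≤ b ∧ b ≤ m)) := by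
  unfold eqm
  rw [abs_le, abs_le]
  tauto

end S17

theorem stmt17 (n : ℕ) (hn : 1 ≤ n)
    (φ : (Fin n → ℤ) → (Fin n → ℤ))
    (hmap : ∀ u ∈ YEven n, φ u ∈ YEven n)
    (hpres : ∀ e ∈ MapsEven n, ∀ u ∈ YEven n, (∀ p, u p ∈ e.1) →
      (∀ p, φ u p ∈ e.1) ∧ φ (fun p => e.2 (u p)) = fun p => e.2 (φ u p))
    (hrel : ∀ m : ℕ, 1 ≤ m → m ≤ n - 1 → ∀ u ∈ YEven n, ∀ v ∈ YEven n,
      (∀ i, eqm m (u i) (v i)) → ∀ i, eqm m (φ u i) (φ v i))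
    (hsurj : ∃ u ∈ YEven n, φ u = bEven n n) :
    ∀ u ∈ YEven n, φ u = u := by
  classical
  have hn' : (1:ℤ) ≤ n := by exact_mod_cast hn
  have P : ∀ t : ℕ, ∀ u ∈ YEven n, ∀ j : Fin n, S17.Wit u j → (j:ℕ) ≤ t → φ u = u := by
    intro t
    induction t with
    | zero =>
      intro u hu j hw hj
      have h0lt : 0 < n := hn
      have hbn : ∀ p : Fin n, u p = ((p:ℕ):ℤ) + 1 := by
        intro p
        have hj0 : (j:ℕ) = 0 := by omega
        have g1 := S17.Ygap hw (p:ℕ) ⟨0, h0lt⟩ p (by rw [Fin.le_def]; omega) (by simp)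
        have g2 := S17.Ygap hw (n - 1 - (p:ℕ)) p ⟨n-1, by omega⟩ (by rw [Fin.le_def]; omega)
          (by simp only [Fin.val_mk]; have := p.isLt; omega)
        have e1 := S17.Ypos hu ⟨0, h0lt⟩
        have e2 := S17.Ylen hu ⟨n-1, by omega⟩
        have := p.isLt
        push_cast at g1 g2 ⊢
        omega
      obtain ⟨w, hwY, hwb⟩ := hsurj
      have hwall : ∀ s : ℤ, 1 ≤ s → s ≤ (n:ℤ) → ∃ p : Fin n, w p = s := by
        intro s hs1 hsn
        by_contra hc
        push_neg at hc
        have hav := S17.avoid φ hmap hpres s hs1 hsn w hwY hc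
        have hlt : s.toNat - 1 < n := by omega
        have hx := hav ⟨s.toNat - 1, hlt⟩
        rw [hwb] at hx
        apply hx
        show max 1 _ = s
        simp only [Fin.val_mk]
        push_cast
        omega
      have hwa := S17.allvals hn w hwY hwall
      have huw : u = w := funext fun p => by rw [hbn p, hwa p]
      rw [huw, hwb]
      funext p
      rw [hwa p]
      show max 1 _ = _
      push_cast
      omega
    | succ t ih =>
      intro u₀ hu₀ j₀ hw₀ hj₀
      rcases Nat.lt_or_ge (j₀:ℕ) (t+1) with hjt | hjt
      case inl => exact ih u₀ hu₀ j₀ hw₀ (by omega)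
      have hjx₀ : (j₀:ℕ) = t + 1 := by omega
      have inner : ∀ M : ℕ, ∀ u, u ∈ YEven n → ∀ j : Fin n, S17.Wit u j → (j:ℕ) = t + 1 →
          (∑ p : Fin n, ((n:ℤ) - u p).toNat) = M → φ u = u := by
        intro M
        induction M using Nat.strong_induction_on with
        | _ M ihM =>
        intro u hu j hw hjx hM
        by_cases hbump : ∃ i : ℕ, 2 ≤ i ∧ i ≤ n ∧ (∃ p, u p = (i:ℤ) - 1) ∧ (∀ p, u p ≠ (i:ℤ))
        · obtain ⟨i, hi2, hin, ⟨p₀, hp₀⟩, hav⟩ := hbump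
          have hi' : (2:ℤ) ≤ i := by exact_mod_cast hi2
          have hiN : (i:ℤ) ≤ n := by exact_mod_cast hin
          set u' : Fin n → ℤ := fun p => fEFun i (u p) with hu'def
          have hfe : ∀ p, u' p = if u p = (i:ℤ) - 1 then (i:ℤ) else u p :=
            fun p => S17.fE_eq i hi2 (u p) (S17.Ypos hu p)
          have hw' : S17.Wit u' j := by
            constructor
            · intro p hp
              rw [hfe p, hfe j, hw.1 p hp]
            · intro p q hp hq
              exact S17.fE_lt i hi2 (S17.Ypos hu p) (S17.Ypos hu q) (hav p) (hav q)
                (hw.2 p q hp hq)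
          have h1' : ∀ p, 1 ≤ u' p := by
            intro p; rw [hfe p]; have := S17.Ypos hu p; split_ifs <;> omega
          have h2' : ∀ p, u' p ≤ (n:ℤ) := by
            intro p; rw [hfe p]; have := S17.Ylen hu p; split_ifs <;> omega
          have hu'Y : u' ∈ YEven n := S17.memY u' j h1' h2' hw'
          have hmeas : (∑ p : Fin n, ((n:ℤ) - u' p).toNat) < M := by
            rw [← hM]
            apply Finset.sum_lt_sum
            · intro p _
              rw [hfe p]
              have := S17.Ypos hu p
              split_ifs <;> omega
            · refine ⟨p₀, Finset.mem_univ _, ?_⟩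
              rw [hfe p₀, if_pos hp₀]
              omega
          have hrec := ihM _ hmeas u' hu'Y j hw' hjx rfl
          have hf := S17.fstep φ hmap hpres i hi2 hin u hu hav
          have e := hf.2
          rw [show (fun p => fEFun i (u p)) = u' from rfl] at e
          rw [hrec] at e
          funext p
          have e2 : u' p = fEFun i (φ u p) := by rw [e]
          rw [hfe p] at e2
          have := S17.fE_eq i hi2 (φ u p) (S17.Ypos (hmap u hu) p)
          have h3 := hf.1 p
          have h4 := hav p
          rw [this] at e2
          split_ifs at e2 <;> omega
        · push_neg at hbump
          have hlastlt : n - 1 < n := by omega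
          set pl : Fin n := ⟨n-1, hlastlt⟩ with hpl
          have hmaxp : ∀ q : Fin n, u q ≤ u pl := by
            intro q
            refine S17.Ymono hu ?_
            rw [Fin.le_def]
            simp only [hpl, Fin.val_mk]
            have := q.isLt
            omega
          have hlast : u pl = (n:ℤ) := by
            by_contra hc
            have h1 := S17.Ypos hu pl
            have h2 := S17.Ylen hu pl
            obtain ⟨q, hq⟩ := hbump (u pl + 1).toNat (by omega) (by omega) ⟨pl, by omega⟩
            have := hmaxp q
            omega
          have hconsec : ∀ p q : Fin n, j ≤ p → (q:ℕ) = (p:ℕ)+1 → u q = u p + 1 := by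
            intro p q hjp hq1
            have hlt := hw.2 p q hjp (by rw [Fin.lt_def]; omega)
            by_contra hc
            have h1 := S17.Ypos hu p
            have h2 := S17.Ylen hu q
            obtain ⟨r, hr⟩ := hbump (u p + 1).toNat (by omega) (by omega) ⟨p, by omega⟩
            have hpr : p < r := by
              by_contra hcc
              push_neg at hcc
              have := S17.Ymono hu hcc
              omega
            have hqr : q ≤ r := by
              rw [Fin.le_def]
              have := Fin.lt_def.mp hpr
              omega
            have := S17.Ymono hu hqr
            omega
          have htail : ∀ d : ℕ, d ≤ n - 1 - (j:ℕ) → ∀ p : Fin n, j ≤ p → (p:ℕ) = n - 1 - d →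
              u p = ((p:ℕ):ℤ) + 1 := by
            intro d
            induction d with
            | zero =>
              intro _ p _ hp
              have hppl : p = pl := Fin.ext (by simp only [hpl, Fin.val_mk]; omega)
              rw [hppl, hlast]
              simp only [hpl, Fin.val_mk]
              push_cast
              omega
            | succ d ihd =>
              intro hdle p hjp hp
              have hjlt := j.isLt
              have hplt : (p:ℕ) + 1 < n := by omega
              have hqv : ((⟨(p:ℕ)+1, hplt⟩ : Fin n):ℕ) = (p:ℕ)+1 := rfl
              have hjq : j ≤ (⟨(p:ℕ)+1, hplt⟩ : Fin n) := by
                rw [Fin.le_def, hqv]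
                have := Fin.le_def.mp hjp
                omega
              have h1 := ihd (by omega) _ hjq (by rw [hqv]; omega)
              have h2 := hconsec p _ hjp hqv
              rw [hqv] at h1
              push_cast at h1 ⊢
              omega
          set a : ℤ := ((j:ℕ):ℤ) + 1 with ha
          have hjlt := j.isLt
          have ha2 : 2 ≤ a := by omega
          have hform : u = S17.shape n a 0 := by
            funext p
            show u p = max a (((p:ℕ):ℤ) + 1 - 0)
            rcases le_or_gt p j with hp | hp
            · have hple := Fin.le_def.mp hp
              rw [hw.1 p hp]
              have hj2 := htail (n - 1 - (j:ℕ)) le_rfl j le_rfl (by omega)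
              omega
            · have hjple := Fin.lt_def.mp hp
              have := p.isLt
              have h1 := htail (n - 1 - (p:ℕ)) (by omega) p (le_of_lt hp) (by omega)
              omega
          by_cases han : a = (n:ℤ)
          · have hvals : ∀ p, u p = (n:ℤ) := by
              intro p
              rw [hform]
              show max a _ = (n:ℤ)
              have := p.isLt
              omega
            funext p
            have h1 := S17.Ypos (hmap u hu) p
            have h2 := S17.Ylen (hmap u hu) p
            rw [hvals p]
            by_contra hc
            exact S17.avoid φ hmap hpres (φ u p) (by omega) h2 u hu
              (fun q => by rw [hvals q]; omega) p rfl
          · have haN : a ≤ (n:ℤ) - 1 := by omega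
            have hzero : 0 < n := hn
            -- the g-chain downward from u = shape(a,0)
            have chain : ∀ s : ℕ, (s:ℤ) ≤ a - 1 →
                φ (S17.shape n (a - s) s) = fun p => φ u p - s := by
              intro s
              induction s with
              | zero =>
                intro _
                have e0 : S17.shape n (a - ((0:ℕ):ℤ)) ((0:ℕ):ℤ) = u := by
                  norm_num [hform]
                rw [e0]
                funext p
                norm_num
              | succ s ihs =>
                intro hs
                have hs' : (s:ℤ) ≤ a - 2 := by push_cast at hs; omega
                have prev := ihs (by omega)
                have hmem : S17.shape n (a - s) s ∈ YEven n :=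
                  S17.shape_mem hn _ _ (by omega) (by omega) (by omega)
                have hcoord : ∀ p, 2 ≤ S17.shape n (a - s) s p := by
                  intro p
                  show 2 ≤ max (a - s) _
                  omega
                have hg := S17.gstep φ hmap hpres _ hmem hcoord
                have harg : (fun p => S17.shape n (a - s) s p - 1)
                    = S17.shape n (a - ((s:ℤ)+1)) ((s:ℤ)+1) := by
                  funext p
                  show max _ _ - 1 = max _ _
                  omega
                have goalcast : S17.shape n (a - ((s+1:ℕ):ℤ)) ((s+1:ℕ):ℤ)
                    = S17.shape n (a - ((s:ℤ)+1)) ((s:ℤ)+1) := by push_cast; rfl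
                rw [goalcast, ← harg, hg.2, prev]
                funext p
                try simp only []
                push_cast
                ring
            have ha1 : (((a-1).toNat:ℕ):ℤ) = a - 1 := by omega
            have hbk0 := chain (a-1).toNat (by omega)
            rw [ha1] at hbk0
            rw [show a - (a-1) = 1 by ring] at hbk0
            set bk : Fin n → ℤ := S17.shape n 1 (a-1) with hbkdef
            set y : Fin n → ℤ := fun p => φ u p - (a-1) with hydef
            have hbk' : φ bk = y := hbk0
            have hbkval : ∀ p : Fin n, bk p = max 1 (((p:ℕ):ℤ) + 1 - (a-1)) := fun p => rfl
            have hbkY : bk ∈ YEven n := S17.shape_mem hn 1 (a-1) le_rfl (by omega) hn'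
            have hypos : ∀ p, 1 ≤ y p := by
              intro p
              have := S17.Ypos (hmap bk hbkY) p
              rw [hbk'] at this
              exact this
            have hbkle : ∀ q : Fin n, bk q ≤ (n:ℤ) - a + 1 := by
              intro q
              rw [hbkval q]
              have := q.isLt
              omega
            have hyle : ∀ p, y p ≤ (n:ℤ) - a + 1 := by
              intro p
              have := S17.val_le φ hmap hpres bk hbkY ((n:ℤ) - a + 1) (by omega) hbkle p
              rw [hbk'] at this
              exact this
            have hbk1p : ∀ p : Fin n, 1 ≤ bk p := fun p => le_max_left _ _
            have hbkpref : ∀ p : Fin n, p ≤ j → bk p = 1 := by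
              intro p hp
              have := Fin.le_def.mp hp
              rw [hbkval p]
              omega
            have hbkstrict : ∀ p q : Fin n, j ≤ p → p < q → bk p < bk q := by
              intro p q hp hq
              have h1 := Fin.le_def.mp hp
              have h2 := Fin.lt_def.mp hq
              rw [hbkval p, hbkval q]
              omega
            -- the bump chain upward from bk
            set ct : ℕ → Fin n → ℤ := fun T p => bk p + (if (T:ℤ) ≤ bk p then 1 else 0)
              with hct
            have hctval : ∀ (T : ℕ) (p : Fin n),
                ct T p = bk p + (if (T:ℤ) ≤ bk p then 1 else 0) := fun T p => rfl
            set k : ℕ := n - (t+1) with hk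
            have hkz : (k:ℤ) = (n:ℤ) - a + 1 := by omega
            have hk2 : 2 ≤ k := by omega
            have hctY : ∀ T : ℕ, 2 ≤ T → ct T ∈ YEven n := by
              intro T hT
              have hT' : (2:ℤ) ≤ (T:ℤ) := by exact_mod_cast hT
              refine S17.memY _ j (fun p => ?_) (fun p => ?_) ⟨?_, ?_⟩
              · rw [hctval T p]
                have := hbk1p p
                split_ifs <;> omega
              · rw [hctval T p]
                have := hbkle p
                split_ifs <;> omega
              · intro p hp
                rw [hctval T p, hctval T j, hbkpref p hp, hbkpref j le_rfl]
              · intro p q hp hq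
                have := hbkstrict p q hp hq
                rw [hctval T p, hctval T q]
                split_ifs <;> omega
            have hmicro : ∀ T : ℕ, 2 ≤ T → ∀ z : ℤ, 1 ≤ z →
                fEFun (T+1) (z + (if ((T:ℤ)+1) ≤ z then 1 else 0))
                  = z + (if (T:ℤ) ≤ z then 1 else 0) := by
              intro T hT z hz
              have hT' : (2:ℤ) ≤ (T:ℤ) := by exact_mod_cast hT
              rw [S17.fE_eq (T+1) (by omega) _ (by split_ifs <;> omega)]
              push_cast
              split_ifs <;> omega
            have hch : ∀ r : ℕ, r ≤ k - 1 →
                φ (ct (k + 1 - r))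
                  = fun p => y p + (if ((k+1-r : ℕ):ℤ) ≤ y p then 1 else 0) := by
              intro r
              induction r with
              | zero =>
                intro _
                simp only [Nat.sub_zero]
                have e1 : ct (k+1) = bk := by
                  funext p
                  rw [hctval (k+1) p]
                  have := hbkle p
                  rw [if_neg (by push_cast; omega), add_zero]
                rw [e1, hbk']
                funext p
                try simp only []
                have := hyle p
                rw [if_neg (by push_cast; omega), add_zero]
              | succ r ihr =>
                intro hr
                have hprev := ihr (by omega)
                have hT2 : 2 ≤ k - r := by omega
                have hTn : (k - r) + 1 ≤ n := by omega
                have hT1 : k + 1 - r = (k - r) + 1 := by omega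
                have hTval : k + 1 - (r+1) = k - r := by omega
                rw [hT1] at hprev
                have hmemT := hctY ((k-r)+1) (by omega)
                have havT : ∀ p, ct ((k-r)+1) p ≠ (((k-r)+1 : ℕ):ℤ) := by
                  intro p
                  rw [hctval _ p]
                  have h1 := hbk1p p
                  push_cast
                  split_ifs <;> omega
                have hfs := S17.fstep φ hmap hpres ((k-r)+1) (by omega) hTn
                  (ct ((k-r)+1)) hmemT havT
                have harg : (fun p => fEFun ((k-r)+1) (ct ((k-r)+1) p)) = ct (k-r) := by
                  funext p
                  rw [hctval _ p, hctval _ p]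
                  have hm := hmicro (k-r) hT2 (bk p) (hbk1p p)
                  push_cast at hm ⊢
                  exact hm
                rw [hTval, ← harg, hfs.2, hprev]
                funext p
                try simp only []
                have hm := hmicro (k-r) hT2 (y p) (hypos p)
                push_cast at hm ⊢
                exact hm
            -- compare ct 2 with b_{k+1} via ≈_2 : forces y 0 = 1
            have hctY2 := hctY 2 le_rfl
            set bk1 : Fin n → ℤ := S17.shape n 1 (a-2) with hbk1def
            have hbk1val : ∀ p : Fin n, bk1 p = max 1 (((p:ℕ):ℤ) + 1 - (a-2)) :=
              fun p => rfl
            have hbk1Y : bk1 ∈ YEven n := S17.shape_mem hn 1 (a-2) le_rfl (by omega) hn'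
            obtain ⟨j1, hw1, hj1⟩ := S17.shape_wit (n := n) hn 1 (a-2) le_rfl (by omega)
            rw [← hbk1def] at hw1
            have hφbk1 : φ bk1 = bk1 := ih bk1 hbk1Y j1 hw1 (by omega)
            have hcmp2 : ∀ p, eqm 2 (ct 2 p) (bk1 p) := by
              intro p
              rw [S17.eqm_iff, hctval 2 p, hbkval p, hbk1val p]
              push_cast
              split_ifs <;> omega
            have hr2 := hrel 2 (by omega) (by omega) (ct 2) hctY2 bk1 hbk1Y hcmp2
            have hd2 := hch (k-1) (by omega)
            rw [show k + 1 - (k-1) = 2 by omega] at hd2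
            have h20 := hr2 ⟨0, hzero⟩
            rw [hd2, hφbk1, S17.eqm_iff] at h20
            try simp only [] at h20
            rw [hbk1val ⟨0, hzero⟩] at h20
            have hy0 : y ⟨0, hzero⟩ = 1 := by
              have hyp := hypos ⟨0, hzero⟩
              have hv0 : (((⟨0, hzero⟩ : Fin n):ℕ):ℤ) = 0 := rfl
              rw [hv0] at h20
              have := hyle ⟨0, hzero⟩
              push_cast at h20
              split_ifs at h20 <;> omega
            have hx0 : φ u ⟨0, hzero⟩ = a := by
              have h := hy0
              simp only [hydef] at h
              omega
            -- compare u with shape(a-1,0) via ≈_a : pins the tail of φ u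
            have huval : ∀ p : Fin n, u p = max a (((p:ℕ):ℤ) + 1) := by
              intro p
              rw [hform]
              show max a (((p:ℕ):ℤ) + 1 - 0) = _
              norm_num
            set v : Fin n → ℤ := S17.shape n (a-1) 0 with hvdef
            have hvval : ∀ p : Fin n, v p = max (a-1) (((p:ℕ):ℤ) + 1) := by
              intro p
              show max (a-1) (((p:ℕ):ℤ) + 1 - 0) = _
              norm_num
            have hvY : v ∈ YEven n := S17.shape_mem hn (a-1) 0 (by omega) le_rfl (by omega)
            obtain ⟨jv, hwv, hjv⟩ := S17.shape_wit (n := n) hn (a-1) 0 (by omega) le_rfl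
            rw [← hvdef] at hwv
            have hφv : φ v = v := ih v hvY jv hwv (by omega)
            have hat : ((a.toNat:ℕ):ℤ) = a := by omega
            have hcmpv : ∀ p, eqm a.toNat (u p) (v p) := by
              intro p
              rw [S17.eqm_iff, huval p, hvval p, hat]
              omega
            have hrv := hrel a.toNat (by omega) (by omega) u hu v hvY hcmpv
            have hhi : ∀ p : Fin n, a ≤ ((p:ℕ):ℤ) → φ u p = ((p:ℕ):ℤ) + 1 := by
              intro p hp
              have h := hrv p
              rw [hφv, S17.eqm_iff, hvval p, hat] at h
              omega
            -- conclude
            funext p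
            rcases le_or_gt a ((p:ℕ):ℤ) with hpa | hpa
            · rw [hhi p hpa, huval p]
              omega
            · have hpan : a.toNat < n := by omega
              have hpav : ((⟨a.toNat, hpan⟩ : Fin n):ℕ) = a.toNat := rfl
              have hxa : φ u ⟨a.toNat, hpan⟩ = a + 1 := by
                have h := hhi ⟨a.toNat, hpan⟩ (by rw [hpav, hat])
                rw [h, hpav, hat]
              have h0v : ((⟨0, hzero⟩ : Fin n):ℕ) = 0 := rfl
              have hm1 : φ u ⟨0, hzero⟩ ≤ φ u p :=
                S17.Ymono (hmap u hu) (by rw [Fin.le_def, h0v]; omega)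
              have hm2 : φ u p ≤ φ u ⟨a.toNat, hpan⟩ :=
                S17.Ymono (hmap u hu) (by rw [Fin.le_def, hpav]; omega)
              have hune : φ u p ≠ a + 1 := by
                intro hceq
                have hplt : p < (⟨a.toNat, hpan⟩ : Fin n) := by
                  rw [Fin.lt_def, hpav]
                  omega
                have hu2 := hmap u hu
                obtain ⟨hz2, jx, hj0x, hx3, hx4⟩ := hu2
                have hpref : (⟨a.toNat, hpan⟩ : Fin n) ≤ jx :=
                  S17.Yprefix ⟨hx3, hx4⟩ hplt (by rw [hceq, hxa])
                have e1 := hx3 ⟨0, hzero⟩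
                  (le_trans (show (⟨0, hzero⟩ : Fin n) ≤ ⟨a.toNat, hpan⟩ by
                    rw [Fin.le_def, h0v, hpav]; omega) hpref)
                have e2 := hx3 ⟨a.toNat, hpan⟩ hpref
                rw [hx0] at e1
                rw [hxa] at e2
                omega
              rw [hx0] at hm1
              rw [hxa] at hm2
              have hup : u p = a := by rw [huval p]; omega
              omega
      exact inner _ u₀ hu₀ j₀ hw₀ hjx₀ rfl
  intro u hu
  have hu2 := hu
  obtain ⟨hz, j, hj0, h3, h4⟩ := hu2
  exact P (n-1) u hu j ⟨h3, h4⟩ (by have := j.isLt; omega)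
end

section
/- Let n ≥ 1 and let M be the set of functions x : Y → Z_{2n} such that: for each e ∈ {f_2,…,f_n, g} and each 𝐮 ∈ Y all of whose coordinates lie in dom e, x(𝐮) ∈ dom e and x(e·𝐮) = e(x(𝐮)) (coordinatewise action); and for each m with 1 ≤ m ≤ n−1, whenever 𝐮, 𝐯 ∈ Y satisfy u_i ≈_m v_i for all i, one has x(𝐮) ≈_m x(𝐯). Then: (a) every (a_1,…,a_n) ∈ B satisfies a_k ≠ 0 and |a_k| ≤ k for 1 ≤ k ≤ n, and B is closed under the coordinatewise operations ∧, ∨, ¬, →; (b) the map t given by t(x) = (x(𝐛_1), x(𝐛_2), …, x(𝐛_n)) is a bijection from M onto B. -/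
/-- The admissibility algebra `B` for the even case, as a set of `n`-tuples
(0-based index `k` corresponds to the 1-based coordinate `a_{k+1}`). -/
def BEven (n : ℕ) : Set (Fin n → ℤ) :=
  {a | ∃ j : ℕ, 1 ≤ j ∧ j ≤ n ∧ ∃ ε : ℤ, (ε = 1 ∨ ε = -1) ∧
    (∀ k : Fin n, (k : ℕ) < j → (a k = 1 ∨ a k = -1)) ∧
    ∀ k : Fin n, j ≤ (k : ℕ) → a k = ε * (((k : ℕ) : ℤ) - (j : ℤ) + 2)}

/-- The set `M` of morphisms from `Y` to `Z_{2n}`: maps preserving the coordinatewise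
actions of `f_2, …, f_n, g` and the relations `≈_1, …, ≈_{n-1}`. -/
def MEven (n : ℕ) : Set ({u : Fin n → ℤ // u ∈ YEven n} → ℤ) :=
  {x | (∀ u : {u : Fin n → ℤ // u ∈ YEven n}, x u ∈ Zeven n) ∧
    (∀ e ∈ MapsEven n, ∀ u v : {u : Fin n → ℤ // u ∈ YEven n},
      (∀ p, u.1 p ∈ e.1) → v.1 = (fun p => e.2 (u.1 p)) → x u ∈ e.1 ∧ x v = e.2 (x u)) ∧
    ∀ m : ℕ, 1 ≤ m → m ≤ n - 1 → ∀ u v : {u : Fin n → ℤ // u ∈ YEven n},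
      (∀ i, eqm m (u.1 i) (v.1 i)) → eqm m (x u) (x v)}

open Classical in
/-- The map `t`, sending `x ∈ M` to `(x(𝐛_1), …, x(𝐛_n))`. -/
noncomputable def tEven (n : ℕ) (x : {u : Fin n → ℤ // u ∈ YEven n} → ℤ) : Fin n → ℤ :=
  fun k => if h : bEven n ((k : ℕ) + 1) ∈ YEven n then x ⟨bEven n ((k : ℕ) + 1), h⟩ else 0

def Qc (x y : ℤ) : Prop :=
  ((x = 1 ∨ x = -1) ∧ -2 ≤ y ∧ y ≤ 2) ∨ (0 < x ∧ y = x + 1) ∨ (x < 0 ∧ y = x - 1)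

def Cc (n : ℕ) (a : Fin n → ℤ) : Prop :=
  (∀ k, a k ≠ 0) ∧ (∀ h : 0 < n, a ⟨0, h⟩ = 1 ∨ a ⟨0, h⟩ = -1) ∧
    ∀ k : ℕ, ∀ h : k + 1 < n, Qc (a ⟨k, by omega⟩) (a ⟨k + 1, h⟩)

lemma BEven_iff_Cc (n : ℕ) (hn : 1 ≤ n) (a : Fin n → ℤ) : a ∈ BEven n ↔ Cc n a := by
  classical
  set A : ℕ → ℤ := fun k => if h : k < n then a ⟨k, h⟩ else 0 with hAdef
  have hA : ∀ (k : ℕ) (h : k < n), a ⟨k, h⟩ = A k := by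
    intro k h; simp [hAdef, h]
  have hAk : ∀ k : Fin n, a k = A (k : ℕ) := by
    intro k; rw [← hA (k : ℕ) k.2]
  constructor
  · rintro ⟨j, hj1, hjn, ε, hε, h1, h2⟩
    have h1' : ∀ k : ℕ, k < n → k < j → A k = 1 ∨ A k = -1 := by
      intro k hkn hkj
      rw [← hA k hkn]; exact h1 ⟨k, hkn⟩ hkj
    have h2' : ∀ k : ℕ, k < n → j ≤ k → A k = ε * ((k : ℤ) - (j : ℤ) + 2) := by
      intro k hkn hkj
      rw [← hA k hkn]; exact h2 ⟨k, hkn⟩ hkj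
    refine ⟨?_, ?_, ?_⟩
    · intro k
      rw [hAk k]
      rcases lt_or_ge (k : ℕ) j with h | h
      · rcases h1' (k : ℕ) k.2 h with h' | h' <;> omega
      · have := h2' (k : ℕ) k.2 h
        rcases hε with rfl | rfl <;> omega
    · intro h
      rw [hA 0 h]
      exact h1' 0 h (by omega)
    · intro k hk
      rw [hA k (by omega), hA (k + 1) hk]
      rcases lt_or_ge (k + 1) j with h | h
      · have e1 := h1' k (by omega) (by omega)
        have e2 := h1' (k + 1) hk h
        left; exact ⟨e1, by omega⟩
      · rcases lt_or_ge k j with h' | h'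
        · have e1 := h1' k (by omega) h'
          have e2 := h2' (k + 1) hk h
          have hj : j = k + 1 := by omega
          subst hj
          left
          refine ⟨e1, ?_⟩
          rcases hε with rfl | rfl <;> (rw [e2]; push_cast; constructor <;> omega)
        · have e1 := h2' k (by omega) h'
          have e2 := h2' (k + 1) hk (by omega)
          right
          rcases hε with rfl | rfl
          · left; rw [e1, e2]; push_cast; omega
          · right; rw [e1, e2]; push_cast; omega
  · rintro ⟨hnz, h0, hQ⟩
    have hnz' : ∀ k : ℕ, k < n → A k ≠ 0 := by
      intro k hk; rw [← hA k hk]; exact hnz ⟨k, hk⟩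
    have h0' : A 0 = 1 ∨ A 0 = -1 := by rw [← hA 0 hn]; exact h0 hn
    have hQ' : ∀ k : ℕ, k + 1 < n → Qc (A k) (A (k + 1)) := by
      intro k hk
      rw [← hA k (by omega), ← hA (k + 1) hk]
      exact hQ k hk
    by_cases hp : ∃ k : ℕ, k < n ∧ (A k ≤ -2 ∨ 2 ≤ A k)
    · set j := Nat.find hp with hjdef
      obtain ⟨hjn, hja⟩ := Nat.find_spec hp
      rw [← hjdef] at hjn hja
      have hmin : ∀ k : ℕ, k < n → k < j → A k = 1 ∨ A k = -1 := by
        intro k hkn hkj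
        have := Nat.find_min hp hkj
        have := hnz' k hkn
        omega
      have hj1 : 1 ≤ j := by
        rcases Nat.eq_zero_or_pos j with h | h
        · rw [h] at hja; omega
        · omega
      obtain ⟨ε, hεpm, hjval⟩ : ∃ ε : ℤ, (ε = 1 ∨ ε = -1) ∧ A j = ε * 2 := by
        have hq := hQ' (j - 1) (by omega)
        have hprev := hmin (j - 1) (by omega) (by omega)
        have hjj : j - 1 + 1 = j := by omega
        rw [hjj] at hq
        rcases le_or_gt (A j) 0 with h | h
        · exact ⟨-1, Or.inr rfl, by rcases hq with ⟨_, _, _⟩ | ⟨_, _⟩ | ⟨_, _⟩ <;> omega⟩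
        · exact ⟨1, Or.inl rfl, by rcases hq with ⟨_, _, _⟩ | ⟨_, _⟩ | ⟨_, _⟩ <;> omega⟩
      have htail : ∀ d : ℕ, j + d < n → A (j + d) = ε * ((j + d : ℤ) - (j : ℤ) + 2) := by
        intro d
        induction d with
        | zero =>
          intro h
          have hz : j + 0 = j := rfl
          rw [hz, hjval]; push_cast; ring
        | succ d ih =>
          intro h
          have hq := hQ' (j + d) (by omega)
          have ihv := ih (by omega)
          rw [ihv] at hq
          have : j + (d + 1) = j + d + 1 := by omega
          rw [this]
          rcases hεpm with rfl | rfl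
          · rcases hq with ⟨h1', _, _⟩ | ⟨_, h2'⟩ | ⟨h1', _⟩ <;> push_cast at * <;> omega
          · rcases hq with ⟨h1', _, _⟩ | ⟨h1', _⟩ | ⟨_, h2'⟩ <;> push_cast at * <;> omega
      refine ⟨j, hj1, by omega, ε, hεpm, ?_, ?_⟩
      · intro k hk
        rw [hAk k]
        exact hmin (k : ℕ) k.2 hk
      · intro k hk
        rw [hAk k]
        have h' := htail ((k : ℕ) - j) (by omega)
        have hkk : j + ((k : ℕ) - j) = (k : ℕ) := by omega
        rw [hkk] at h'
        rw [h']
        congr 1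
        omega
    · push_neg at hp
      refine ⟨n, hn, le_refl n, 1, Or.inl rfl, ?_, ?_⟩
      · intro k _
        rw [hAk k]
        have := hp (k : ℕ) k.2
        have := hnz' (k : ℕ) k.2
        omega
      · intro k hk
        exact absurd hk (by omega)

lemma Qc_min {x0 x1 y0 y1 : ℤ} (hx0 : x0 ≠ 0) (hy0 : y0 ≠ 0)
    (hx : Qc x0 x1) (hy : Qc y0 y1) : Qc (min x0 y0) (min x1 y1) := by
  unfold Qc at *; omega

lemma Qc_max {x0 x1 y0 y1 : ℤ} (hx0 : x0 ≠ 0) (hy0 : y0 ≠ 0)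
    (hx : Qc x0 x1) (hy : Qc y0 y1) : Qc (max x0 y0) (max x1 y1) := by
  unfold Qc at *; omega

lemma Qc_neg {x0 x1 : ℤ} (hx : Qc x0 x1) : Qc (-x0) (-x1) := by
  unfold Qc at *; omega

lemma Qc_simp {x0 x1 y0 y1 : ℤ} (hx0 : x0 ≠ 0) (hy0 : y0 ≠ 0)
    (hx : Qc x0 x1) (hy : Qc y0 y1) : Qc (SImp x0 y0) (SImp x1 y1) := by
  unfold Qc SImp at *
  split_ifs <;> omega

lemma part_a_bounds (n : ℕ) (a : Fin n → ℤ) (ha : a ∈ BEven n) (k : Fin n) :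
    a k ≠ 0 ∧ |a k| ≤ ((k : ℕ) : ℤ) + 1 := by
  obtain ⟨j, hj1, hjn, ε, hε, h1, h2⟩ := ha
  rcases lt_or_ge (k : ℕ) j with h | h
  · rcases h1 k h with h' | h' <;> rw [h'] <;>
      exact ⟨by omega, by rw [abs_le]; constructor <;> omega⟩
  · have := h2 k h
    rcases hε with rfl | rfl <;> rw [this] <;>
      exact ⟨by omega, by rw [abs_le]; constructor <;> omega⟩

lemma part_a_closure (n : ℕ) (hn : 1 ≤ n) (a : Fin n → ℤ) (ha : a ∈ BEven n)
    (b : Fin n → ℤ) (hb : b ∈ BEven n) :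
    (fun k => min (a k) (b k)) ∈ BEven n ∧ (fun k => max (a k) (b k)) ∈ BEven n ∧
      (fun k => -a k) ∈ BEven n ∧ (fun k => SImp (a k) (b k)) ∈ BEven n := by
  rw [BEven_iff_Cc n hn] at ha hb
  obtain ⟨ha1, ha2, ha3⟩ := ha
  obtain ⟨hb1, hb2, hb3⟩ := hb
  refine ⟨?_, ?_, ?_, ?_⟩ <;> rw [BEven_iff_Cc n hn]
  · exact ⟨fun k => by have := ha1 k; have := hb1 k; simp only; omega,
      fun h => by have := ha2 h; have := hb2 h; simp only; omega,
      fun k h => Qc_min (ha1 _) (hb1 _) (ha3 k h) (hb3 k h)⟩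
  · exact ⟨fun k => by have := ha1 k; have := hb1 k; simp only; omega,
      fun h => by have := ha2 h; have := hb2 h; simp only; omega,
      fun k h => Qc_max (ha1 _) (hb1 _) (ha3 k h) (hb3 k h)⟩
  · exact ⟨fun k => by have := ha1 k; simp only; omega,
      fun h => by have := ha2 h; simp only; omega,
      fun k h => Qc_neg (ha3 k h)⟩
  · refine ⟨fun k => ?_, fun h => ?_, fun k h => Qc_simp (ha1 _) (hb1 _) (ha3 k h) (hb3 k h)⟩
    · have := ha1 k; have := hb1 k; simp only [SImp]; split_ifs <;> omega
    · have := ha2 h; have := hb2 h; simp only [SImp]; split_ifs <;> omega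

-- ## Y infrastructure

lemma Y_pos {n : ℕ} {u : Fin n → ℤ} (hu : u ∈ YEven n) : ∀ p, 0 < u p := by
  obtain ⟨hz, j, hj, hconst, hmono⟩ := hu
  intro p
  rcases le_or_gt p j with h | h
  · rw [hconst p h]; exact hj
  · have := hmono j p (le_refl j) h
    omega

lemma Y_mono {n : ℕ} {u : Fin n → ℤ} (hu : u ∈ YEven n) :
    ∀ p q : Fin n, p ≤ q → u p ≤ u q := by
  obtain ⟨hz, j, hj, hconst, hmono⟩ := hu
  intro p q hpq
  rcases eq_or_lt_of_le hpq with h | h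
  · rw [h]
  rcases le_or_gt q j with h2 | h2
  · rw [hconst p (le_trans hpq h2), hconst q h2]
  rcases le_or_gt p j with h3 | h3
  · rw [hconst p h3]
    exact le_of_lt (hmono j q (le_refl j) h2)
  · exact le_of_lt (hmono p q (le_of_lt h3) h)

lemma Y_j_unique {n : ℕ} {u : Fin n → ℤ} (j j' : Fin n)
    (hc : ∀ i, i ≤ j → u i = u j) (hm : ∀ k l : Fin n, j ≤ k → k < l → u k < u l)
    (hc' : ∀ i, i ≤ j' → u i = u j') (hm' : ∀ k l : Fin n, j' ≤ k → k < l → u k < u l) :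
    j = j' := by
  by_contra h
  rcases lt_or_gt_of_ne h with h' | h'
  · have h1 := hm j j' (le_refl j) h'
    have h2 := hc' j (le_of_lt h')
    omega
  · have h1 := hm' j' j (le_refl j') h'
    have h2 := hc j' (le_of_lt h')
    omega

/-- The unique "block end" index of an element of `Y`. -/
noncomputable def jY {n : ℕ} {u : Fin n → ℤ} (hu : u ∈ YEven n) : Fin n := hu.2.choose

lemma jY_spec {n : ℕ} {u : Fin n → ℤ} (hu : u ∈ YEven n) :
    0 < u (jY hu) ∧ (∀ i, i ≤ jY hu → u i = u (jY hu)) ∧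
      ∀ k l : Fin n, jY hu ≤ k → k < l → u k < u l := hu.2.choose_spec

lemma jY_eq {n : ℕ} {u : Fin n → ℤ} (hu : u ∈ YEven n) (j : Fin n)
    (hc : ∀ i, i ≤ j → u i = u j) (hm : ∀ k l : Fin n, j ≤ k → k < l → u k < u l) :
    jY hu = j :=
  Y_j_unique (jY hu) j (jY_spec hu).2.1 (jY_spec hu).2.2 hc hm

-- ## membership of the generators

lemma bEven_mem_Y {n k : ℕ} (h1 : 1 ≤ k) (h2 : k ≤ n) : bEven n k ∈ YEven n := by
  refine ⟨fun p => ?_, ⟨n - k, by omega⟩, ?_, ?_, ?_⟩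
  · have := p.2
    simp only [Zeven, Set.mem_setOf_eq, bEven]
    omega
  · simp only [bEven, Fin.val_mk]
    omega
  · intro i hi
    rw [Fin.le_def] at hi
    simp only [Fin.val_mk] at hi
    have := i.2
    simp only [bEven, Fin.val_mk]
    omega
  · intro p q hp hq
    rw [Fin.le_def] at hp
    rw [Fin.lt_def] at hq
    simp only [Fin.val_mk] at hp
    have := q.2
    simp only [bEven]
    omega

lemma jY_bEven {n k : ℕ} (h1 : 1 ≤ k) (h2 : k ≤ n) :
    (jY (bEven_mem_Y h1 h2) : ℕ) = n - k := by
  have := jY_eq (bEven_mem_Y h1 h2) ⟨n - k, by omega⟩ ?_ ?_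
  · rw [this]
  · intro i hi
    rw [Fin.le_def] at hi
    simp only [Fin.val_mk] at hi
    have := i.2
    simp only [bEven, Fin.val_mk]
    omega
  · intro p q hp hq
    rw [Fin.le_def] at hp
    rw [Fin.lt_def] at hq
    simp only [Fin.val_mk] at hp
    have := q.2
    simp only [bEven]
    omega

def cEven (n k : ℕ) : Fin n → ℤ := fun p => bEven n k p + 1

lemma cEven_mem_Y {n k : ℕ} (h1 : 1 ≤ k) (h2 : k < n) : cEven n k ∈ YEven n := by
  refine ⟨fun p => ?_, ⟨n - k, by omega⟩, ?_, ?_, ?_⟩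
  · have := p.2
    simp only [Zeven, Set.mem_setOf_eq, cEven, bEven]
    omega
  · simp only [cEven, bEven, Fin.val_mk]
    omega
  · intro i hi
    rw [Fin.le_def] at hi
    simp only [Fin.val_mk] at hi
    have := i.2
    simp only [cEven, bEven, Fin.val_mk]
    omega
  · intro p q hp hq
    rw [Fin.le_def] at hp
    rw [Fin.lt_def] at hq
    simp only [Fin.val_mk] at hp
    have := q.2
    simp only [cEven, bEven]
    omega

-- ## extracting the morphism conditions

lemma M_g {n : ℕ} {x : {u : Fin n → ℤ // u ∈ YEven n} → ℤ} (hx : x ∈ MEven n)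
    (u v : {u : Fin n → ℤ // u ∈ YEven n})
    (hdom : ∀ p, u.1 p ∈ Zeven n \ ({1, -1} : Set ℤ))
    (hv : v.1 = fun p => gEFun (u.1 p)) :
    x u ∈ Zeven n \ ({1, -1} : Set ℤ) ∧ x v = gEFun (x u) :=
  hx.2.1 (Zeven n \ {1, -1}, gEFun) (Or.inr rfl) u v hdom hv

lemma M_f {n : ℕ} {x : {u : Fin n → ℤ // u ∈ YEven n} → ℤ} (hx : x ∈ MEven n)
    (i : ℕ) (hi2 : 2 ≤ i) (hin : i ≤ n)
    (u v : {u : Fin n → ℤ // u ∈ YEven n})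
    (hdom : ∀ p, u.1 p ∈ Zeven n \ ({(i : ℤ), -(i : ℤ)} : Set ℤ))
    (hv : v.1 = fun p => fEFun i (u.1 p)) :
    x u ∈ Zeven n \ ({(i : ℤ), -(i : ℤ)} : Set ℤ) ∧ x v = fEFun i (x u) :=
  hx.2.1 (Zeven n \ {(i : ℤ), -(i : ℤ)}, fEFun i) (Or.inl ⟨i, hi2, hin, rfl⟩) u v hdom hv

-- value of x on cEven n k in terms of its value on bEven n k
lemma xval_c {n : ℕ} {x : {u : Fin n → ℤ // u ∈ YEven n} → ℤ} (hx : x ∈ MEven n)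
    {k : ℕ} (h1 : 1 ≤ k) (h2 : k < n) :
    (0 < x ⟨bEven n k, bEven_mem_Y h1 (by omega)⟩ ∧
      x ⟨cEven n k, cEven_mem_Y h1 h2⟩ = x ⟨bEven n k, bEven_mem_Y h1 (by omega)⟩ + 1) ∨
    (x ⟨bEven n k, bEven_mem_Y h1 (by omega)⟩ < 0 ∧
      x ⟨cEven n k, cEven_mem_Y h1 h2⟩ = x ⟨bEven n k, bEven_mem_Y h1 (by omega)⟩ - 1) := by
  have hg := M_g hx ⟨cEven n k, cEven_mem_Y h1 h2⟩ ⟨bEven n k, bEven_mem_Y h1 (by omega)⟩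
    (fun p => by
      have := p.2
      simp only [cEven, bEven, Zeven, Set.mem_diff, Set.mem_setOf_eq, Set.mem_insert_iff,
        Set.mem_singleton_iff]
      omega)
    (by
      funext p
      simp only [cEven, bEven, gEFun]
      have := p.2
      split_ifs <;> omega)
  obtain ⟨⟨hz, hne⟩, heq⟩ := hg
  simp only [Zeven, Set.mem_setOf_eq, Set.mem_insert_iff, Set.mem_singleton_iff] at hz hne
  push_neg at hne
  rw [heq]
  unfold gEFun
  split_ifs with h
  · left; constructor <;> omega
  · right; constructor <;> omega

lemma tEven_apply {n : ℕ} (x : {u : Fin n → ℤ // u ∈ YEven n} → ℤ) (k : ℕ) (hk : k < n) :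
    tEven n x ⟨k, hk⟩ = x ⟨bEven n (k + 1), bEven_mem_Y (by omega) (by omega)⟩ := by
  rw [tEven, dif_pos]

-- x(b_1) = ±1
lemma xb1_pm {n : ℕ} {x : {u : Fin n → ℤ // u ∈ YEven n} → ℤ} (hx : x ∈ MEven n)
    (hn : 1 ≤ n) :
    x ⟨bEven n 1, bEven_mem_Y (le_refl 1) hn⟩ = 1 ∨
      x ⟨bEven n 1, bEven_mem_Y (le_refl 1) hn⟩ = -1 := by
  rcases eq_or_lt_of_le hn with h | h
  · -- n = 1
    have := hx.1 ⟨bEven n 1, bEven_mem_Y (le_refl 1) hn⟩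
    simp only [Zeven, Set.mem_setOf_eq] at this
    omega
  · -- n ≥ 2 : use f_2 and g
    have hc := xval_c hx (le_refl 1) h
    have hf := M_f hx 2 (le_refl 2) (by omega)
      ⟨bEven n 1, bEven_mem_Y (le_refl 1) hn⟩ ⟨cEven n 1, cEven_mem_Y (le_refl 1) h⟩
      (fun p => by
        have := p.2
        simp only [bEven, Zeven, Set.mem_diff, Set.mem_setOf_eq, Set.mem_insert_iff,
          Set.mem_singleton_iff]
        push_cast
        omega)
      (by
        funext p
        simp only [cEven, bEven, fEFun]
        have := p.2
        push_cast
        split_ifs <;> omega)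
    obtain ⟨⟨hz, hne⟩, heq⟩ := hf
    simp only [Zeven, Set.mem_setOf_eq, Set.mem_insert_iff, Set.mem_singleton_iff] at hz hne
    push_neg at hne
    rw [heq] at hc
    unfold fEFun at hc
    push_cast at hc
    split_ifs at hc <;> omega

-- ## MapsTo
lemma t_mapsTo {n : ℕ} (hn : 1 ≤ n) {x : {u : Fin n → ℤ // u ∈ YEven n} → ℤ}
    (hx : x ∈ MEven n) : tEven n x ∈ BEven n := by
  rw [BEven_iff_Cc n hn]
  refine ⟨?_, ?_, ?_⟩
  · intro k
    have hk : tEven n x k = tEven n x ⟨(k : ℕ), k.2⟩ := rfl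
    rw [hk, tEven_apply x (k : ℕ) k.2]
    have := hx.1 ⟨bEven n ((k : ℕ) + 1), bEven_mem_Y (by omega) (by omega)⟩
    simp only [Zeven, Set.mem_setOf_eq] at this
    exact this.2
  · intro h
    rw [tEven_apply x 0 h]
    exact xb1_pm hx hn
  · intro k hk
    rw [tEven_apply x k (by omega), tEven_apply x (k + 1) hk]
    have hc := xval_c hx (k := k + 1) (by omega) (by omega)
    rcases eq_or_lt_of_le (show 2 ≤ n by omega) with h2 | h2
    · -- n = 2, k = 0
      have hk0 : k = 0 := by omega
      subst hk0
      have h1 := xb1_pm hx hn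
      have hb2 := hx.1 ⟨bEven n (0 + 1 + 1), bEven_mem_Y (by omega) (by omega)⟩
      simp only [Zeven, Set.mem_setOf_eq] at hb2
      left
      constructor
      · exact h1
      · omega
    · -- n ≥ 3 : use ≈₂ between cEven n (k+1) and bEven n (k+2)
      have hrel := hx.2.2 2 (by omega) (by omega)
        ⟨cEven n (k + 1), cEven_mem_Y (by omega) (by omega)⟩
        ⟨bEven n (k + 1 + 1), bEven_mem_Y (by omega) (by omega)⟩
        (fun p => by
          have := p.2
          simp only [eqm, cEven, bEven, abs_le]
          push_cast
          omega)
      simp only [eqm, abs_le] at hrel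
      have hnz := hx.1 ⟨bEven n (k + 1), bEven_mem_Y (by omega) (by omega)⟩
      simp only [Zeven, Set.mem_setOf_eq] at hnz
      unfold Qc
      omega

-- ## elementary facts about the maps

lemma fE_lt {i : ℕ} (hi : 2 ≤ i) {a b : ℤ} (ha : 0 < a) (hb : 0 < b)
    (hai : a ≠ (i : ℤ)) (hbi : b ≠ (i : ℤ)) (hab : a < b) : fEFun i a < fEFun i b := by
  unfold fEFun; split_ifs <;> omega

lemma gE_lt {a b : ℤ} (ha : 0 < a) (hb : 0 < b) (hab : a < b) : gEFun a < gEFun b := by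
  unfold gEFun; split_ifs <;> omega

lemma fE_odd {i : ℕ} (hi : 2 ≤ i) (a : ℤ) : fEFun i (-a) = -fEFun i a := by
  unfold fEFun; split_ifs <;> omega

lemma gE_odd {a : ℤ} (ha : a ≠ 0) : gEFun (-a) = -gEFun a := by
  unfold gEFun; split_ifs <;> omega

lemma pm_mul_mem {n : ℕ} {c a : ℤ} (hc : c = 1 ∨ c = -1) (ha : a ∈ Zeven n) :
    c * a ∈ Zeven n := by
  simp only [Zeven, Set.mem_setOf_eq] at *
  rcases hc with rfl | rfl <;> omega

lemma pm_mul_mem_diff {n : ℕ} {c a d : ℤ} (hc : c = 1 ∨ c = -1)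
    (ha : a ∈ Zeven n \ ({d, -d} : Set ℤ)) : c * a ∈ Zeven n \ ({d, -d} : Set ℤ) := by
  simp only [Zeven, Set.mem_diff, Set.mem_setOf_eq, Set.mem_insert_iff,
    Set.mem_singleton_iff] at *
  rcases hc with rfl | rfl <;> push_neg at * <;> omega

lemma eqm_mul_pm {m : ℕ} {c a b : ℤ} (hc : c = 1 ∨ c = -1) (h : eqm m a b) :
    eqm m (c * a) (c * b) := by
  simp only [eqm, abs_le] at *
  rcases hc with rfl | rfl <;> omega

lemma jY_congr {n : ℕ} {u v : {w : Fin n → ℤ // w ∈ YEven n}} (h : u.1 = v.1) :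
    jY u.2 = jY v.2 := by
  rw [Subtype.ext h]

lemma jY_map {n : ℕ} {u v : Fin n → ℤ} (hu : u ∈ YEven n) (hv : v ∈ YEven n)
    (φ : ℤ → ℤ) (hφ : ∀ p, v p = φ (u p))
    (hmono : ∀ p q : Fin n, u p < u q → φ (u p) < φ (u q)) :
    jY hv = jY hu := by
  apply jY_eq
  · intro i hi
    rw [hφ i, hφ (jY hu), (jY_spec hu).2.1 i hi]
  · intro k l hk hl
    rw [hφ k, hφ l]
    exact hmono k l ((jY_spec hu).2.2 k l hk hl)

-- block coordinates agree with coordinate 0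
lemma Y_block {n : ℕ} {u : Fin n → ℤ} (hu : u ∈ YEven n) (p : Fin n) (hp : p ≤ jY hu) :
    u p = u ⟨0, by omega⟩ := by
  rw [(jY_spec hu).2.1 p hp, (jY_spec hu).2.1 ⟨0, by omega⟩ (by
    rw [Fin.le_def]; simp only [Fin.val_mk]; omega)]

-- ## the canonical morphism attached to an element of B

noncomputable def xB (n j : ℕ) (hj1 : 1 ≤ j) (ε : ℤ) (s : Fin n → ℤ) :
    {u : Fin n → ℤ // u ∈ YEven n} → ℤ := fun u =>
  if n - ((jY u.2 : Fin n) : ℕ) - 1 < j then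
    s ⟨n - ((jY u.2 : Fin n) : ℕ) - 1, by have := (jY u.2).2; omega⟩ *
      u.1 ⟨0, by have := (jY u.2).2; omega⟩
  else
    ε * u.1 ⟨n - j, by have := (jY u.2).2; omega⟩

lemma xB_pos {n j : ℕ} (hj1 : 1 ≤ j) (ε : ℤ) (s : Fin n → ℤ)
    (u : {u : Fin n → ℤ // u ∈ YEven n}) (h : n - ((jY u.2 : Fin n) : ℕ) - 1 < j) :
    xB n j hj1 ε s u =
      s ⟨n - ((jY u.2 : Fin n) : ℕ) - 1, by have := (jY u.2).2; omega⟩ *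
        u.1 ⟨0, by have := (jY u.2).2; omega⟩ := by
  rw [xB, if_pos h]

lemma xB_neg {n j : ℕ} (hj1 : 1 ≤ j) (ε : ℤ) (s : Fin n → ℤ)
    (u : {u : Fin n → ℤ // u ∈ YEven n}) (h : ¬ (n - ((jY u.2 : Fin n) : ℕ) - 1 < j)) :
    xB n j hj1 ε s u = ε * u.1 ⟨n - j, by have := (jY u.2).2; omega⟩ := by
  rw [xB, if_neg h]

lemma xB_mem_M (n j : ℕ) (hj1 : 1 ≤ j) (hjn : j ≤ n) (ε : ℤ) (hε : ε = 1 ∨ ε = -1)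
    (s : Fin n → ℤ) (hs : ∀ k : Fin n, (k : ℕ) < j → s k = 1 ∨ s k = -1) :
    xB n j hj1 ε s ∈ MEven n := by
  refine ⟨?_, ?_, ?_⟩
  · -- values in Zeven
    intro u
    by_cases h : n - ((jY u.2 : Fin n) : ℕ) - 1 < j
    · rw [xB_pos hj1 ε s u h]
      exact pm_mul_mem (hs _ (by simpa using h)) (u.2.1 _)
    · rw [xB_neg hj1 ε s u h]
      exact pm_mul_mem hε (u.2.1 _)
  · -- equivariance
    intro e he u v hdom hv
    -- φ and oddness facts by cases on e
    have hposu := Y_pos u.2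
    obtain ⟨φ, hφdom, hφodd, hφmono⟩ :
        ∃ φ : ℤ → ℤ, e.2 = φ ∧ (∀ a : ℤ, 0 < a → φ (-a) = -φ a) ∧
          (∀ p q : Fin n, u.1 p < u.1 q → φ (u.1 p) < φ (u.1 q)) := by
      rcases he with ⟨i, hi2, hin, rfl⟩ | rfl
      · refine ⟨fEFun i, rfl, fun a ha => fE_odd hi2 a, fun p q hpq => ?_⟩
        have h1 := hdom p
        have h2 := hdom q
        simp only [Zeven, Set.mem_diff, Set.mem_setOf_eq, Set.mem_insert_iff,
          Set.mem_singleton_iff] at h1 h2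
        push_neg at h1 h2
        exact fE_lt hi2 (hposu p) (hposu q) h1.2.1 h2.2.1 hpq
      · exact ⟨gEFun, rfl, fun a ha => gE_odd (by omega), fun p q hpq =>
          gE_lt (hposu p) (hposu q) hpq⟩
    have hv' : ∀ p, v.1 p = φ (u.1 p) := by
      intro p; rw [hv, hφdom]
    have hjv : jY v.2 = jY u.2 := jY_map u.2 v.2 φ hv' hφmono
    have hjvv : ((jY v.2 : Fin n) : ℕ) = ((jY u.2 : Fin n) : ℕ) := by rw [hjv]
    -- commute a ±1 factor through φ
    have hcomm : ∀ (c : ℤ), (c = 1 ∨ c = -1) → ∀ p : Fin n, c * φ (u.1 p) = φ (c * u.1 p) := by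
      intro c hc p
      rcases hc with rfl | rfl
      · simp
      · have := hφodd (u.1 p) (hposu p)
        have h1 : (-1 : ℤ) * u.1 p = -(u.1 p) := by ring
        rw [h1, this]; ring
    constructor
    · -- xB u in the domain of e
      by_cases h : n - ((jY u.2 : Fin n) : ℕ) - 1 < j
      · rw [xB_pos hj1 ε s u h]
        rcases he with ⟨i, hi2, hin, rfl⟩ | rfl
        · exact pm_mul_mem_diff (hs _ (by simpa using h)) (hdom _)
        · exact pm_mul_mem_diff (d := 1) (hs _ (by simpa using h)) (hdom _)
      · rw [xB_neg hj1 ε s u h]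
        rcases he with ⟨i, hi2, hin, rfl⟩ | rfl
        · exact pm_mul_mem_diff hε (hdom _)
        · exact pm_mul_mem_diff (d := 1) hε (hdom _)
    · -- equivariance equation
      rw [hφdom]
      by_cases h : n - ((jY u.2 : Fin n) : ℕ) - 1 < j
      · rw [xB_pos hj1 ε s u h, xB_pos hj1 ε s v (by rw [hjvv]; exact h)]
        have hidx : (⟨n - ((jY v.2 : Fin n) : ℕ) - 1, by have := (jY v.2).2; omega⟩ : Fin n)
            = ⟨n - ((jY u.2 : Fin n) : ℕ) - 1, by have := (jY u.2).2; omega⟩ := by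
          apply Fin.ext; simp only [Fin.val_mk]; omega
        rw [hidx, hv' _]
        exact hcomm _ (hs _ (by simpa using h)) _
      · rw [xB_neg hj1 ε s u h, xB_neg hj1 ε s v (by rw [hjvv]; exact h)]
        rw [hv' _]
        exact hcomm _ hε _
  · -- eqm preservation
    intro m hm1 hm2 u v hrel
    have hposu := Y_pos u.2
    have hposv := Y_pos v.2
    have hne0 : (0 : ℕ) < n := by have := (jY u.2).2; omega
    by_cases huv : u.1 = v.1
    · have huv' : u = v := Subtype.ext huv
      subst huv'
      left
      rfl
    · -- u ≠ v : first coordinates are ≤ m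
      have hkey : ∀ (w z : {w : Fin n → ℤ // w ∈ YEven n}), w.1 ≠ z.1 →
          (∀ i, eqm m (w.1 i) (z.1 i)) → w.1 ⟨0, hne0⟩ ≤ (m : ℤ) := by
        intro w z hwz hr
        by_contra hgt
        push_neg at hgt
        apply hwz
        funext p
        have h1 := Y_mono w.2 ⟨0, hne0⟩ p (by rw [Fin.le_def]; simp only [Fin.val_mk]; omega)
        have h2 := hr p
        have h3 := Y_pos w.2 p
        simp only [eqm, abs_le] at h2
        omega
      have hu0 : u.1 ⟨0, hne0⟩ ≤ (m : ℤ) := hkey u v huv hrel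
      have hv0 : v.1 ⟨0, hne0⟩ ≤ (m : ℤ) :=
        hkey v u (fun h => huv h.symm) (fun i => by
          have := hrel i
          simp only [eqm] at this ⊢
          tauto)
      by_cases hcu : n - ((jY u.2 : Fin n) : ℕ) - 1 < j <;>
        by_cases hcv : n - ((jY v.2 : Fin n) : ℕ) - 1 < j
      · -- both in block-branch
        rw [xB_pos hj1 ε s u hcu, xB_pos hj1 ε s v hcv]
        right
        constructor
        · rw [abs_mul]
          rcases hs ⟨n - ((jY u.2 : Fin n) : ℕ) - 1, by have := (jY u.2).2; omega⟩ hcu with h' | h' <;>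
            rw [h'] <;> simp <;> rw [abs_le] <;>
            exact ⟨by have := hposu ⟨0, hne0⟩; omega, hu0⟩
        · rw [abs_mul]
          rcases hs ⟨n - ((jY v.2 : Fin n) : ℕ) - 1, by have := (jY v.2).2; omega⟩ hcv with h' | h' <;>
            rw [h'] <;> simp <;> rw [abs_le] <;>
            exact ⟨by have := hposv ⟨0, hne0⟩; omega, hv0⟩
      · -- u block, v tail
        rw [xB_pos hj1 ε s u hcu, xB_neg hj1 ε s v hcv]
        right
        have hvnj : v.1 ⟨n - j, by omega⟩ ≤ (m : ℤ) := by
          have hub : u.1 ⟨n - j, by omega⟩ = u.1 ⟨0, hne0⟩ := by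
            apply Y_block u.2
            rw [Fin.le_def]
            simp only [Fin.val_mk]
            have := (jY u.2).2
            omega
          have := hrel ⟨n - j, by omega⟩
          simp only [eqm, abs_le] at this
          omega
        constructor
        · rw [abs_mul]
          rcases hs ⟨n - ((jY u.2 : Fin n) : ℕ) - 1, by have := (jY u.2).2; omega⟩ hcu with h' | h' <;>
            rw [h'] <;> simp <;> rw [abs_le] <;>
            exact ⟨by have := hposu ⟨0, hne0⟩; omega, hu0⟩
        · rw [abs_mul]
          rcases hε with rfl | rfl <;> simp <;> rw [abs_le] <;>
            exact ⟨by have := hposv ⟨n - j, by omega⟩; omega, hvnj⟩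
      · -- u tail, v block
        rw [xB_neg hj1 ε s u hcu, xB_pos hj1 ε s v hcv]
        right
        have hunj : u.1 ⟨n - j, by omega⟩ ≤ (m : ℤ) := by
          have hvb : v.1 ⟨n - j, by omega⟩ = v.1 ⟨0, hne0⟩ := by
            apply Y_block v.2
            rw [Fin.le_def]
            simp only [Fin.val_mk]
            have := (jY v.2).2
            omega
          have := hrel ⟨n - j, by omega⟩
          simp only [eqm, abs_le] at this
          omega
        constructor
        · rw [abs_mul]
          rcases hε with rfl | rfl <;> simp <;> rw [abs_le] <;>
            exact ⟨by have := hposu ⟨n - j, by omega⟩; omega, hunj⟩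
        · rw [abs_mul]
          rcases hs ⟨n - ((jY v.2 : Fin n) : ℕ) - 1, by have := (jY v.2).2; omega⟩ hcv with h' | h' <;>
            rw [h'] <;> simp <;> rw [abs_le] <;>
            exact ⟨by have := hposv ⟨0, hne0⟩; omega, hv0⟩
      · -- both tail
        rw [xB_neg hj1 ε s u hcu, xB_neg hj1 ε s v hcv]
        exact eqm_mul_pm hε (hrel ⟨n - j, by omega⟩)

lemma t_xB {n j : ℕ} (hj1 : 1 ≤ j) (hjn : j ≤ n) (ε : ℤ) (hε : ε = 1 ∨ ε = -1)
    (b : Fin n → ℤ) (hs : ∀ k : Fin n, (k : ℕ) < j → b k = 1 ∨ b k = -1)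
    (ht : ∀ k : Fin n, j ≤ (k : ℕ) → b k = ε * (((k : ℕ) : ℤ) - (j : ℤ) + 2)) :
    tEven n (xB n j hj1 ε b) = b := by
  funext k
  have hk : tEven n (xB n j hj1 ε b) k = tEven n (xB n j hj1 ε b) ⟨(k : ℕ), k.2⟩ := rfl
  rw [hk, tEven_apply _ (k : ℕ) k.2]
  set u : {u : Fin n → ℤ // u ∈ YEven n} :=
    ⟨bEven n ((k : ℕ) + 1), bEven_mem_Y (by omega) (by omega)⟩ with hudef
  have hju : ((jY u.2 : Fin n) : ℕ) = n - ((k : ℕ) + 1) := jY_bEven (by omega) (by omega)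
  have hk2 := k.2
  by_cases h : (k : ℕ) < j
  · rw [xB_pos hj1 ε b u (by rw [hju]; omega)]
    have hidx : (⟨n - ((jY u.2 : Fin n) : ℕ) - 1, by have := (jY u.2).2; omega⟩ : Fin n) = k := by
      apply Fin.ext; simp only [Fin.val_mk]; omega
    rw [hidx]
    have hval : u.1 ⟨0, by have := (jY u.2).2; omega⟩ = 1 := by
      simp only [hudef, bEven, Fin.val_mk]
      push_cast
      omega
    rw [hval, mul_one]
  · rw [xB_neg hj1 ε b u (by rw [hju]; omega)]
    have hval : u.1 ⟨n - j, by have := (jY u.2).2; omega⟩ = ((k : ℕ) : ℤ) - (j : ℤ) + 2 := by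
      simp only [hudef, bEven, Fin.val_mk]
      push_cast
      omega
    rw [hval, ht k (by omega)]

-- ## generation of Y by the maps f_i from the b_k

lemma Y_grow {n : ℕ} {u : Fin n → ℤ} (hu : u ∈ YEven n) :
    ∀ d : ℕ, ∀ h : ((jY hu : Fin n) : ℕ) + d < n,
      u (jY hu) + (d : ℤ) ≤ u ⟨((jY hu : Fin n) : ℕ) + d, h⟩ := by
  intro d
  induction d with
  | zero =>
    intro h
    have : (⟨((jY hu : Fin n) : ℕ) + 0, h⟩ : Fin n) = jY hu := by
      apply Fin.ext; simp
    rw [this]; simp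
  | succ d ih =>
    intro h
    have h1 := ih (by omega)
    have h2 := (jY_spec hu).2.2 ⟨((jY hu : Fin n) : ℕ) + d, by omega⟩
      ⟨((jY hu : Fin n) : ℕ) + d + 1, by omega⟩
      (by rw [Fin.le_def]; simp only [Fin.val_mk]; omega)
      (by rw [Fin.lt_def]; simp only [Fin.val_mk]; omega)
    have he : (⟨((jY hu : Fin n) : ℕ) + (d + 1), h⟩ : Fin n)
        = ⟨((jY hu : Fin n) : ℕ) + d + 1, by omega⟩ := by
      apply Fin.ext; simp only [Fin.val_mk]; omega
    rw [he]
    push_cast at h1 ⊢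
    omega

lemma Y_block_iff {n : ℕ} {u : Fin n → ℤ} (hu : u ∈ YEven n) (p : Fin n) :
    u p = u ⟨0, by have := (jY hu).2; omega⟩ ↔ p ≤ jY hu := by
  constructor
  · intro h
    by_contra hgt
    push_neg at hgt
    have := (jY_spec hu).2.2 (jY hu) p (le_refl _) hgt
    have hb := Y_block hu (jY hu) (le_refl _)
    omega
  · intro h
    rw [Y_block hu p h]

lemma Y_generated {n : ℕ} {u : Fin n → ℤ} (hu : u ∈ YEven n) :
    (∃ k : ℕ, 1 ≤ k ∧ k ≤ n ∧ u = bEven n k) ∨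
    ∃ (i : ℕ) (v : Fin n → ℤ), v ∈ YEven n ∧ 2 ≤ i ∧ i ≤ n ∧
      (∀ p, v p ∈ Zeven n \ ({(i : ℤ), -(i : ℤ)} : Set ℤ)) ∧
      (∀ p, u p = fEFun i (v p)) ∧
      (∑ p, (v p).toNat) < ∑ p, (u p).toNat := by
  classical
  have hne0 : 0 < n := by have := (jY hu).2; omega
  set j : Fin n := jY hu with hjdef
  have hpos := Y_pos hu
  have hzev : ∀ p : Fin n, u p ∈ Zeven n := hu.1
  have hbd : ∀ p : Fin n, 1 ≤ u p ∧ u p ≤ (n : ℤ) := by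
    intro p
    have h1 := hzev p
    simp only [Zeven, Set.mem_setOf_eq] at h1
    have := hpos p
    omega
  have hblock := Y_block_iff hu
  have hstrict := (jY_spec hu).2.2
  have hj0 : u j = u ⟨0, hne0⟩ := (Y_block hu j (le_refl j)).symm ▸ rfl
  rcases lt_or_ge 1 (u ⟨0, hne0⟩) with hc | hc
  · -- block value ≥ 2 : lower the whole block
    right
    set c : ℤ := u ⟨0, hne0⟩ with hcdef
    refine ⟨c.toNat, (fun p => if u p = c then c - 1 else u p), ?_, by omega, ?_, ?_, ?_, ?_⟩
    · refine ⟨fun p => ?_, j, ?_, ?_, ?_⟩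
      · have := hbd p
        simp only [Zeven, Set.mem_setOf_eq]
        beta_reduce
        split_ifs <;> omega
      · have hbj : u j = c := by rw [hj0]
        simp only [hbj, if_pos rfl]
        omega
      · intro i hi
        have h1 : u i = c := (hblock i).2 (le_trans hi (le_refl j))
        have h2 : u j = c := by rw [hj0]
        simp only [h1, h2, if_pos rfl]
      · intro k l hk hl
        have hul : ¬ (u l = c) := by
          intro h
          have := (hblock l).1 h
          rw [Fin.le_def] at *
          rw [Fin.lt_def] at hl
          omega
        have hkl := hstrict k l hk hl
        beta_reduce
        split_ifs <;> omega
    · have := hbd ⟨0, hne0⟩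
      omega
    · intro p
      have h1 := hbd p
      simp only [Zeven, Set.mem_diff, Set.mem_setOf_eq, Set.mem_insert_iff,
        Set.mem_singleton_iff]
      push_neg
      have hup : u p = c ∨ c < u p := by
        rcases eq_or_ne (u p) c with h | h
        · left; exact h
        · right
          have : ¬ p ≤ j := fun hle => h ((hblock p).2 hle)
          rw [Fin.le_def] at this
          have := hstrict j p (le_refl j) (by rw [Fin.lt_def]; omega)
          omega
      have hcn : (c.toNat : ℤ) = c := by omega
      beta_reduce
      split_ifs <;> (rw [hcn] <;> omega)
    · intro p
      have h1 := hbd p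
      have hcn : (c.toNat : ℤ) = c := by omega
      have hup : u p = c ∨ c < u p := by
        rcases eq_or_ne (u p) c with h | h
        · left; exact h
        · right
          have : ¬ p ≤ j := fun hle => h ((hblock p).2 hle)
          rw [Fin.le_def] at this
          have := hstrict j p (le_refl j) (by rw [Fin.lt_def]; omega)
          omega
      unfold fEFun
      beta_reduce
      rw [hcn]
      split_ifs <;> omega
    · apply Finset.sum_lt_sum
      · intro p _
        have := hbd p
        beta_reduce
        split_ifs <;> omega
      · refine ⟨⟨0, hne0⟩, Finset.mem_univ _, ?_⟩
        beta_reduce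
        rw [if_pos rfl]
        omega
  · -- block value = 1
    have hc1 : u ⟨0, hne0⟩ = 1 := by have := hbd ⟨0, hne0⟩; omega
    by_cases hgap : ∃ p : ℕ, ∃ hp : p < n, ((j : ℕ) < p ∧ u ⟨p, hp⟩ ≠ (p : ℤ) - ((j : ℕ) : ℤ) + 1)
    · -- there is a gap : lower the first gap coordinate
      right
      set p0 : ℕ := Nat.find hgap with hp0def
      obtain ⟨h1', h2', h3'⟩ := Nat.find_spec hgap
      have hp0n : p0 < n := h1'
      have hp0j : (j : ℕ) < p0 := h2'
      have hp0ne : u ⟨p0, hp0n⟩ ≠ (p0 : ℤ) - ((j : ℕ) : ℤ) + 1 := h3'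
      clear h3'
      have hnogap : ∀ q : ℕ, (j : ℕ) < q → q < p0 → ∀ hq : q < n,
          u ⟨q, hq⟩ = (q : ℤ) - ((j : ℕ) : ℤ) + 1 := by
        intro q hq1 hq2 hq
        have := Nat.find_min hgap (m := q) (by omega)
        push_neg at this
        have := this hq
        omega
      -- growth bound at p0
      have hgrow := Y_grow hu (p0 - (j : ℕ)) (by omega)
      have hval : u ⟨p0, hp0n⟩ ≥ (p0 : ℤ) - ((j : ℕ) : ℤ) + 2 := by
        have heq : (⟨(j : ℕ) + (p0 - (j : ℕ)), by omega⟩ : Fin n) = ⟨p0, hp0n⟩ := by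
          apply Fin.ext; simp only [Fin.val_mk]; omega
        rw [heq] at hgrow
        have : u (jY hu) = 1 := by rw [← hjdef, hj0, hc1]
        rw [this] at hgrow
        have : ((p0 - (j : ℕ) : ℕ) : ℤ) = (p0 : ℤ) - ((j : ℕ) : ℤ) := by omega
        omega
      -- value just below p0
      have hprev : ∀ q : Fin n, (q : ℕ) < p0 → u q ≤ (p0 : ℤ) - ((j : ℕ) : ℤ) := by
        intro q hq
        rcases le_or_gt (q : ℕ) (j : ℕ) with h | h
        · have : u q = 1 := by
            rw [(hblock q).2 (by rw [Fin.le_def]; omega), hc1]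
          omega
        · have := hnogap (q : ℕ) h hq q.2
          have hqq : (⟨(q : ℕ), q.2⟩ : Fin n) = q := by apply Fin.ext; simp
          rw [hqq] at this
          omega
      set i : ℤ := u ⟨p0, hp0n⟩ with hidef
      have hin : i ≤ (n : ℤ) := (hbd _).2
      refine ⟨i.toNat, (fun q => if (q : ℕ) = p0 then u q - 1 else u q), ?_, by omega, by omega,
        ?_, ?_, ?_⟩
      · refine ⟨fun q => ?_, j, ?_, ?_, ?_⟩
        · have := hbd q
          simp only [Zeven, Set.mem_setOf_eq]
          beta_reduce
          split_ifs with h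
          · have hqq : (⟨(q : ℕ), q.2⟩ : Fin n) = q := by apply Fin.ext; simp
            have : u q = i := by rw [← hqq]; simp only [hidef]; congr 1; apply Fin.ext; simp [h]
            omega
          · omega
        · beta_reduce
          rw [if_neg (show ¬((j : ℕ) = p0) by omega)]
          exact (jY_spec hu).1
        · intro q hq
          rw [Fin.le_def] at hq
          beta_reduce
          rw [if_neg (show ¬((q : ℕ) = p0) by omega), if_neg (show ¬((j : ℕ) = p0) by omega)]
          exact (jY_spec hu).2.1 q (by rw [Fin.le_def]; exact hq)
        · intro k l hk hl
          have hkl := hstrict k l hk hl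
          have hkp : (k : ℕ) = p0 → u k = i := by
            intro h
            rw [hidef]; congr 1; apply Fin.ext; simp [h]
          have hlp : (l : ℕ) = p0 → u l = i := by
            intro h
            rw [hidef]; congr 1; apply Fin.ext; simp [h]
          rw [Fin.lt_def] at hl
          rw [Fin.le_def] at hk
          beta_reduce
          split_ifs with h1 h2 h3
          · omega
          · -- k = p0, l ≠ p0 : u k - 1 < u l
            have := hkp h1
            omega
          · -- k ≠ p0, l = p0 : u k < u l - 1
            have := hlp h3
            have := hprev k (by omega)
            omega
          · omega
      · intro q
        have h1 := hbd q
        simp only [Zeven, Set.mem_diff, Set.mem_setOf_eq, Set.mem_insert_iff,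
          Set.mem_singleton_iff]
        push_neg
        have hcn : (i.toNat : ℤ) = i := by have := hbd ⟨p0, hp0n⟩; omega
        beta_reduce
        rw [hcn]
        split_ifs with h
        · have : u q = i := by rw [hidef]; congr 1; apply Fin.ext; simp [h]
          omega
        · rcases lt_or_ge (q : ℕ) p0 with h' | h'
          · have := hprev q h'
            omega
          · have hq : p0 < (q : ℕ) := by omega
            have := hstrict ⟨p0, hp0n⟩ q (by rw [Fin.le_def]; simp only [Fin.val_mk]; omega)
              (by rw [Fin.lt_def]; simp only [Fin.val_mk]; omega)
            omega
      · intro q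
        have h1 := hbd q
        have hcn : (i.toNat : ℤ) = i := by have := hbd ⟨p0, hp0n⟩; omega
        unfold fEFun
        beta_reduce
        rw [hcn]
        have hqi : (q : ℕ) = p0 → u q = i := by
          intro h
          rw [hidef]; congr 1; apply Fin.ext; simp [h]
        have hqlt : (q : ℕ) < p0 → u q ≤ (p0 : ℤ) - ((j : ℕ) : ℤ) := hprev q
        have hqgt : p0 < (q : ℕ) → i < u q := by
          intro h
          exact hstrict ⟨p0, hp0n⟩ q (by rw [Fin.le_def]; simp only [Fin.val_mk]; omega)
            (by rw [Fin.lt_def]; simp only [Fin.val_mk]; omega)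
        split_ifs <;> omega
      · apply Finset.sum_lt_sum
        · intro q _
          have := hbd q
          beta_reduce
          split_ifs <;> omega
        · refine ⟨⟨p0, hp0n⟩, Finset.mem_univ _, ?_⟩
          beta_reduce
          rw [if_pos rfl]
          omega
    · -- no gap : u = bEven n (n - j)
      left
      push_neg at hgap
      refine ⟨n - (j : ℕ), by have := j.2; omega, by omega, ?_⟩
      funext p
      have hbe : bEven n (n - (j : ℕ)) p =
          max 1 (((p : ℕ) : ℤ) + 1 - ((n : ℤ) - ((n - (j : ℕ) : ℕ) : ℤ))) := rfl
      rcases le_or_gt (p : ℕ) (j : ℕ) with h | h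
      · have h1 : u p = 1 := by rw [(hblock p).2 (by rw [Fin.le_def]; exact h), hc1]
        rw [h1, hbe]
        have := j.2
        omega
      · have h1 := hgap (p : ℕ) p.2 h
        have hqq : (⟨(p : ℕ), p.2⟩ : Fin n) = p := by apply Fin.ext; simp
        rw [hqq] at h1
        rw [h1, hbe]
        have := j.2
        have := p.2
        omega

-- ## uniqueness: a morphism is determined by its values on the b_k

lemma M_agree {n : ℕ} {x y : {u : Fin n → ℤ // u ∈ YEven n} → ℤ}
    (hx : x ∈ MEven n) (hy : y ∈ MEven n)
    (h : ∀ k : ℕ, ∀ hkn : k < n,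
      x ⟨bEven n (k + 1), bEven_mem_Y (by omega) (by omega)⟩ =
        y ⟨bEven n (k + 1), bEven_mem_Y (by omega) (by omega)⟩) : x = y := by
  have key : ∀ N : ℕ, ∀ u : {u : Fin n → ℤ // u ∈ YEven n},
      (∑ p, (u.1 p).toNat) = N → x u = y u := by
    intro N
    induction N using Nat.strong_induction_on with
    | _ N ih =>
      intro u hN
      rcases Y_generated u.2 with ⟨k, hk1, hk2, hb⟩ | ⟨i, v, hv, hi2, hin, hdom, hfe, hlt⟩
      · have hk' : (k - 1) + 1 = k := by omega
        have hu : u = ⟨bEven n ((k - 1) + 1), bEven_mem_Y (by omega) (by omega)⟩ :=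
          Subtype.ext (by rw [hb]; exact congrArg (bEven n) hk'.symm)
        rw [hu]
        exact h (k - 1) (by omega)
      · have hxe := M_f hx i hi2 hin ⟨v, hv⟩ u hdom (funext hfe)
        have hye := M_f hy i hi2 hin ⟨v, hv⟩ u hdom (funext hfe)
        rw [hxe.2, hye.2, ih (∑ p, (v p).toNat) (by omega) ⟨v, hv⟩ rfl]
  funext u
  exact key _ u rfl


theorem stmt18 (n : ℕ) (hn : 1 ≤ n) :
    (∀ a ∈ BEven n, ∀ k : Fin n, a k ≠ 0 ∧ |a k| ≤ ((k : ℕ) : ℤ) + 1) ∧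
    (∀ a ∈ BEven n, ∀ b ∈ BEven n,
      (fun k => min (a k) (b k)) ∈ BEven n ∧ (fun k => max (a k) (b k)) ∈ BEven n ∧
      (fun k => -a k) ∈ BEven n ∧ (fun k => SImp (a k) (b k)) ∈ BEven n) ∧
    Set.BijOn (tEven n) (MEven n) (BEven n) := by
  refine ⟨fun a ha k => part_a_bounds n a ha k,
    fun a ha b hb => part_a_closure n hn a ha b hb,
    fun x hx => t_mapsTo hn hx, ?_, ?_⟩
  · intro x hx y hy heq
    apply M_agree hx hy
    intro k hk
    have := congrFun heq ⟨k, hk⟩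
    rwa [tEven_apply x k hk, tEven_apply y k hk] at this
  · intro b hb
    obtain ⟨j, hj1, hjn, ε, hε, h1, h2⟩ := hb
    exact ⟨xB n j hj1 ε b, xB_mem_M n j hj1 hjn ε hε b h1, t_xB hj1 hjn ε hε b h1 h2⟩
end

section
/- For every n ≥ 1: the set B_{2n} has exactly 3·2^n − 4 elements, and the set B_{2n+1} has exactly 5·2^n − 4 elements. -/
/-- The admissibility algebra `B` for the odd case, as a set of `(n+1)`-tuples
(0-based index `k` corresponds to the 1-based coordinate `a_{k+1}`). -/
def BOdd (n : ℕ) : Set (Fin (n + 1) → ℤ) :=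
  {a | ∃ j : ℕ, 1 ≤ j ∧ j ≤ n ∧ ∃ ε : ℤ, (ε = 1 ∨ ε = -1) ∧
    (∀ k : Fin (n + 1), (k : ℕ) < j → (a k = 1 ∨ a k = -1)) ∧
    (∀ k : Fin (n + 1), j ≤ (k : ℕ) → (k : ℕ) < n →
      a k = ε * (((k : ℕ) : ℤ) - (j : ℤ) + 2)) ∧
    (if j < n then a (Fin.last n) = a ⟨n - 1, by omega⟩
      else (a (Fin.last n) = -1 ∨ a (Fin.last n) = 0 ∨ a (Fin.last n) = 1))}

/-- the four "j = 1" special tuples in the even case -/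
def wE (n : ℕ) (s ε : ℤ) : Fin (n + 1) → ℤ :=
  fun k => if (k : ℕ) = 0 then s else ε * ((k : ℕ) + 1)

lemma wE_zero (n : ℕ) (s ε : ℤ) : wE n s ε 0 = s := rfl

lemma wE_one (n : ℕ) (hn : 1 ≤ n) (s ε : ℤ) : wE n s ε ⟨1, by omega⟩ = 2 * ε := by
  simp [wE]; ring

lemma BEven_first {n : ℕ} (hn : 0 < n) {b : Fin n → ℤ} (hb : b ∈ BEven n) :
    b ⟨0, hn⟩ = 1 ∨ b ⟨0, hn⟩ = -1 := by
  obtain ⟨j, hj1, _, ε, _, h1, _⟩ := hb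
  exact h1 ⟨0, hn⟩ (by show 0 < j; omega)

lemma BEven_one : BEven 1 = {fun _ => 1, fun _ => (-1 : ℤ)} := by
  ext a
  constructor
  · intro ha
    have := BEven_first (by norm_num) ha
    have he : a = fun _ => a ⟨0, by norm_num⟩ := by
      funext k
      have : k = ⟨0, by norm_num⟩ := Subsingleton.elim _ _
      rw [this]
    rcases this with h | h
    · left; rw [he, h]
    · right; rw [he, h]; rfl
  · rintro (rfl | rfl)
    · exact ⟨1, le_refl _, le_refl _, 1, Or.inl rfl, fun k hk => Or.inl rfl,
        fun k hk => by omega⟩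
    · exact ⟨1, le_refl _, le_refl _, 1, Or.inl rfl, fun k hk => Or.inr rfl,
        fun k hk => by omega⟩

lemma wE_mem (n : ℕ) {s ε : ℤ} (hs : s = 1 ∨ s = -1) (hε : ε = 1 ∨ ε = -1) :
    wE n s ε ∈ BEven (n + 1) := by
  refine ⟨1, le_refl _, by omega, ε, hε, fun k hk => ?_, fun k hk => ?_⟩
  · have hk0 : (k : ℕ) = 0 := by omega
    simp only [wE, hk0, if_pos rfl]
    exact hs
  · have hk0 : (k : ℕ) ≠ 0 := by omega
    simp only [wE, hk0, if_neg hk0]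
    push_cast
    ring

def consZ {n : ℕ} (x : ℤ) (b : Fin n → ℤ) : Fin (n + 1) → ℤ := Fin.cons x b

lemma consZ_injective {n : ℕ} (x : ℤ) : Function.Injective (consZ (n := n) x) := by
  intro a b h
  funext i
  have := congrFun h i.succ
  rwa [show consZ x a i.succ = a i from rfl, show consZ x b i.succ = b i from rfl] at this

lemma consZ_zero {n : ℕ} (x : ℤ) (b : Fin n → ℤ) : consZ x b 0 = x := rfl

lemma consZ_succ {n : ℕ} (x : ℤ) (b : Fin n → ℤ) (i : Fin n) : consZ x b i.succ = b i := rfl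

lemma BEven_succ (n : ℕ) (hn : 1 ≤ n) :
    BEven (n + 1) = (consZ 1 '' BEven n) ∪ (consZ (-1) '' BEven n) ∪
      {wE n 1 1, wE n 1 (-1), wE n (-1) 1, wE n (-1) (-1)} := by
  ext a
  constructor
  · rintro ⟨j, hj1, hjn, ε, hε, h1, h2⟩
    by_cases hj : j = 1
    · right
      subst hj
      have ha : a = wE n (a 0) ε := by
        funext k
        by_cases hk : (k : ℕ) = 0
        · have hk0 : k = 0 := Fin.ext hk
          rw [hk0]
          exact (wE_zero n (a 0) ε).symm
        · have := h2 k (by omega)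
          simp only [wE, if_neg hk, this]
          push_cast
          ring
      have h0 := h1 0 (by simp only [Fin.val_zero]; omega)
      rcases h0 with h0 | h0 <;> rcases hε with rfl | rfl <;>
        rw [ha, h0] <;> simp [Set.mem_insert_iff]
    · -- j ≥ 2
      left
      have htail : Fin.tail a ∈ BEven n := by
        refine ⟨j - 1, by omega, by omega, ε, hε, fun k hk => ?_, fun k hk => ?_⟩
        · exact h1 k.succ (by simp [Fin.val_succ]; omega)
        · have := h2 k.succ (by simp [Fin.val_succ]; omega)
          show a k.succ = _
          rw [this]
          have : ((j - 1 : ℕ) : ℤ) = (j : ℤ) - 1 := by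
            have : 1 ≤ j := hj1
            push_cast [Nat.cast_sub this]
            ring
          rw [this]
          simp only [Fin.val_succ]
          push_cast
          ring
      have h0 := h1 0 (by simp only [Fin.val_zero]; omega)
      have hcons : a = Fin.cons (a 0) (Fin.tail a) := (Fin.cons_self_tail a).symm
      rcases h0 with h0 | h0
      · left
        exact ⟨Fin.tail a, htail, by rw [← h0]; exact Fin.cons_self_tail a⟩
      · right
        exact ⟨Fin.tail a, htail, by rw [← h0]; exact Fin.cons_self_tail a⟩
  · rintro ((⟨b, hb, rfl⟩ | ⟨b, hb, rfl⟩) | h)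
    · obtain ⟨j, hj1, hjn, ε, hε, h1, h2⟩ := hb
      refine ⟨j + 1, by omega, by omega, ε, hε, fun k hk => ?_, fun k hk => ?_⟩
      · cases k using Fin.cases with
        | zero => simp [consZ]
        | succ i =>
          rw [consZ_succ]
          exact h1 i (by simp [Fin.val_succ] at hk ⊢; omega)
      · cases k using Fin.cases with
        | zero => simp at hk
        | succ i =>
          rw [consZ_succ]
          rw [h2 i (by simp [Fin.val_succ] at hk; omega)]
          simp only [Fin.val_succ]
          push_cast
          ring
    · obtain ⟨j, hj1, hjn, ε, hε, h1, h2⟩ := hb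
      refine ⟨j + 1, by omega, by omega, ε, hε, fun k hk => ?_, fun k hk => ?_⟩
      · cases k using Fin.cases with
        | zero => simp [consZ]
        | succ i =>
          rw [consZ_succ]
          exact h1 i (by simp [Fin.val_succ] at hk ⊢; omega)
      · cases k using Fin.cases with
        | zero => simp at hk
        | succ i =>
          rw [consZ_succ]
          rw [h2 i (by simp [Fin.val_succ] at hk; omega)]
          simp only [Fin.val_succ]
          push_cast
          ring
    · rcases h with rfl | rfl | rfl | rfl
      · exact wE_mem n (Or.inl rfl) (Or.inl rfl)
      · exact wE_mem n (Or.inl rfl) (Or.inr rfl)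
      · exact wE_mem n (Or.inr rfl) (Or.inl rfl)
      · exact wE_mem n (Or.inr rfl) (Or.inr rfl)

lemma wE_inj {n : ℕ} (hn : 1 ≤ n) {s ε s' ε' : ℤ} (h : wE n s ε = wE n s' ε') :
    s = s' ∧ ε = ε' := by
  have h0 := congrFun h 0
  rw [wE_zero, wE_zero] at h0
  have h1 := congrFun h ⟨1, by omega⟩
  rw [wE_one n hn, wE_one n hn] at h1
  exact ⟨h0, by linarith⟩

lemma BEven_second {n : ℕ} (hn : 1 ≤ n) {x : ℤ} {b : Fin n → ℤ} (hb : b ∈ BEven n) :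
    consZ x b ⟨1, Nat.lt_succ_of_le hn⟩ = 1 ∨ consZ x b ⟨1, Nat.lt_succ_of_le hn⟩ = -1 := by
  have he : (⟨1, Nat.lt_succ_of_le hn⟩ : Fin (n + 1)) = Fin.succ ⟨0, hn⟩ := rfl
  rw [he, consZ_succ]
  exact BEven_first hn hb

lemma even_step (n : ℕ) (hn : 1 ≤ n) (hfin : (BEven n).Finite)
    (hcard : (BEven n).ncard = 3 * 2 ^ n - 4) :
    (BEven (n + 1)).Finite ∧ (BEven (n + 1)).ncard = 3 * 2 ^ (n + 1) - 4 := by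
  have hp2 : 2 ≤ 2 ^ n := by
    calc 2 = 2 ^ 1 := rfl
    _ ≤ 2 ^ n := Nat.pow_le_pow_right (by norm_num) hn
  rw [BEven_succ n hn]
  have hfin1 : (consZ (1 : ℤ) '' BEven n ∪ consZ (-1 : ℤ) '' BEven n).Finite :=
    (hfin.image _).union (hfin.image _)
  have hdisj1 : Disjoint (consZ (1 : ℤ) '' BEven n) (consZ (-1 : ℤ) '' BEven n) := by
    rw [Set.disjoint_left]
    rintro a ⟨b, _, rfl⟩ ⟨c, _, hc⟩
    have := congrFun hc 0
    rw [consZ_zero, consZ_zero] at this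
    norm_num at this
  have hdisj2 : Disjoint (consZ (1 : ℤ) '' BEven n ∪ consZ (-1 : ℤ) '' BEven n)
      ({wE n 1 1, wE n 1 (-1), wE n (-1) 1, wE n (-1) (-1)} : Set (Fin (n + 1) → ℤ)) := by
    rw [Set.disjoint_left]
    rintro a (⟨b, hb, rfl⟩ | ⟨b, hb, rfl⟩) hmem
    · have h2 := BEven_second (x := 1) hn hb
      rcases hmem with h | h | h | h <;> rw [h, wE_one n hn] at h2 <;> omega
    · have h2 := BEven_second (x := -1) hn hb
      rcases hmem with h | h | h | h <;> rw [h, wE_one n hn] at h2 <;> omega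
  have hT : ({wE n 1 1, wE n 1 (-1), wE n (-1) 1, wE n (-1) (-1)} :
      Set (Fin (n + 1) → ℤ)).ncard = 4 := by
    rw [Set.ncard_insert_of_notMem, Set.ncard_insert_of_notMem,
      Set.ncard_insert_of_notMem, Set.ncard_singleton]
    · intro h
      rw [Set.mem_singleton_iff] at h
      have := wE_inj hn h
      omega
    · intro h
      rcases h with h | h <;> · have := wE_inj hn h; omega
    · intro h
      rcases h with h | h | h <;> · have := wE_inj hn h; omega
  constructor
  · exact hfin1.union (Set.toFinite _)
  · rw [Set.ncard_union_eq hdisj2 hfin1 (Set.toFinite _),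
      Set.ncard_union_eq hdisj1 (hfin.image _) (hfin.image _),
      Set.ncard_image_of_injective _ (consZ_injective _),
      Set.ncard_image_of_injective _ (consZ_injective _), hcard, hT, pow_succ]
    omega

def v (s t : ℤ) : Fin 2 → ℤ := fun k => if (k : ℕ) = 0 then s else t

lemma v_zero (s t : ℤ) : v s t 0 = s := rfl
lemma v_one (s t : ℤ) : v s t 1 = t := rfl

lemma v_inj {s t s' t' : ℤ} (h : v s t = v s' t') : s = s' ∧ t = t' :=
  ⟨congrFun h 0, congrFun h 1⟩

lemma BOdd_one : BOdd 1 =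
    {v 1 (-1), v 1 0, v 1 1, v (-1) (-1), v (-1) 0, v (-1) 1} := by
  ext a
  constructor
  · rintro ⟨j, hj1, hjn, ε, hε, h1, h2, hlast⟩
    have hj : j = 1 := by omega
    subst hj
    rw [if_neg (lt_irrefl 1)] at hlast
    have h0 := h1 0 (by norm_num)
    have ha : a = v (a 0) (a (Fin.last 1)) := by
      funext k
      fin_cases k
      · rfl
      · rfl
    rcases h0 with h0 | h0 <;> rcases hlast with hl | hl | hl <;>
      rw [ha, h0, hl] <;> simp [Set.mem_insert_iff]
  · have key : ∀ s t : ℤ, (s = 1 ∨ s = -1) → (t = -1 ∨ t = 0 ∨ t = 1) → v s t ∈ BOdd 1 := by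
      intro s t hs ht
      refine ⟨1, le_refl _, le_refl _, 1, Or.inl rfl, fun k hk => ?_, fun k hk hk' => by omega,
        ?_⟩
      · have hk0 : (k : ℕ) = 0 := by omega
        simp only [v, hk0, if_pos rfl]
        exact hs
      · rw [if_neg (lt_irrefl 1)]
        exact ht
    rintro (rfl | rfl | rfl | rfl | rfl | rfl) <;>
      [ exact key _ _ (Or.inl rfl) (Or.inl rfl);
        exact key _ _ (Or.inl rfl) (Or.inr (Or.inl rfl));
        exact key _ _ (Or.inl rfl) (Or.inr (Or.inr rfl));
        exact key _ _ (Or.inr rfl) (Or.inl rfl);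
        exact key _ _ (Or.inr rfl) (Or.inr (Or.inl rfl));
        exact key _ _ (Or.inr rfl) (Or.inr (Or.inr rfl))]

lemma BOdd_one_card : (BOdd 1).ncard = 6 := by
  rw [BOdd_one]
  rw [Set.ncard_insert_of_notMem, Set.ncard_insert_of_notMem, Set.ncard_insert_of_notMem,
    Set.ncard_insert_of_notMem, Set.ncard_insert_of_notMem, Set.ncard_singleton]
  · intro h
    rw [Set.mem_singleton_iff] at h
    have := v_inj h; omega
  · intro h
    rcases h with h | h <;> · have := v_inj h; omega
  · intro h
    rcases h with h | h | h <;> · have := v_inj h; omega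
  · intro h
    rcases h with h | h | h | h <;> · have := v_inj h; omega
  · intro h
    rcases h with h | h | h | h | h <;> · have := v_inj h; omega

def wO (n : ℕ) (s ε : ℤ) : Fin (n + 2) → ℤ :=
  fun k => if (k : ℕ) = 0 then s else if (k : ℕ) ≤ n then ε * ((k : ℕ) + 1)
    else ε * ((n : ℕ) + 1)

lemma wO_zero (n : ℕ) (s ε : ℤ) : wO n s ε 0 = s := rfl

lemma wO_one (n : ℕ) (hn : 1 ≤ n) (s ε : ℤ) : wO n s ε ⟨1, by omega⟩ = 2 * ε := by
  simp only [wO]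
  rw [if_neg (by norm_num), if_pos (by omega)]
  push_cast
  ring

lemma wO_inj {n : ℕ} (hn : 1 ≤ n) {s ε s' ε' : ℤ} (h : wO n s ε = wO n s' ε') :
    s = s' ∧ ε = ε' := by
  have h0 := congrFun h 0
  rw [wO_zero, wO_zero] at h0
  have h1 := congrFun h ⟨1, by omega⟩
  rw [wO_one n hn, wO_one n hn] at h1
  exact ⟨h0, by linarith⟩

lemma BOdd_first {n : ℕ} {b : Fin (n + 1) → ℤ} (hb : b ∈ BOdd n) :
    b 0 = 1 ∨ b 0 = -1 := by
  obtain ⟨j, hj1, _, ε, _, h1, _⟩ := hb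
  exact h1 0 (by simp only [Fin.val_zero]; omega)

lemma BOdd_second {n : ℕ} {x : ℤ} {b : Fin (n + 1) → ℤ} (hb : b ∈ BOdd n) :
    consZ x b ⟨1, by omega⟩ = 1 ∨ consZ x b ⟨1, by omega⟩ = -1 := by
  have he : (⟨1, by omega⟩ : Fin (n + 2)) = Fin.succ 0 := rfl
  rw [he, consZ_succ]
  exact BOdd_first hb

lemma wO_mem (n : ℕ) (hn : 1 ≤ n) {s ε : ℤ} (hs : s = 1 ∨ s = -1) (hε : ε = 1 ∨ ε = -1) :
    wO n s ε ∈ BOdd (n + 1) := by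
  refine ⟨1, le_refl _, by omega, ε, hε, fun k hk => ?_, fun k hk hk' => ?_, ?_⟩
  · have hk0 : (k : ℕ) = 0 := by omega
    simp only [wO, hk0, if_pos rfl]
    exact hs
  · have hk0 : (k : ℕ) ≠ 0 := by omega
    simp only [wO, if_neg hk0, if_pos (show (k : ℕ) ≤ n by omega)]
    push_cast
    ring
  · rw [if_pos (by omega)]
    have e1 : ((Fin.last (n + 1) : Fin (n + 2)) : ℕ) = n + 1 := rfl
    have e2 : ((⟨n + 1 - 1, by omega⟩ : Fin (n + 2)) : ℕ) = n := by simp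
    simp only [wO, e1, e2]
    rw [if_neg (by omega), if_neg (by omega), if_neg (by omega),
      if_pos (show n + 1 - 1 ≤ n by omega)]
    norm_num

lemma BOdd_succ (n : ℕ) (hn : 1 ≤ n) :
    BOdd (n + 1) = (consZ 1 '' BOdd n) ∪ (consZ (-1) '' BOdd n) ∪
      {wO n 1 1, wO n 1 (-1), wO n (-1) 1, wO n (-1) (-1)} := by
  ext a
  constructor
  · rintro ⟨j, hj1, hjn, ε, hε, h1, h2, hlast⟩
    by_cases hj : j = 1
    · right
      subst hj
      rw [if_pos (by omega)] at hlast
      have ha : a = wO n (a 0) ε := by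
        funext k
        by_cases hk : (k : ℕ) = 0
        · have hk0 : k = 0 := Fin.ext hk
          rw [hk0]
          exact (wO_zero n (a 0) ε).symm
        · by_cases hk2 : (k : ℕ) ≤ n
          · rw [h2 k (by omega) (by omega)]
            simp only [wO, if_neg hk, if_pos hk2]
            push_cast
            ring
          · have hkl : k = Fin.last (n + 1) := Fin.ext (by have := k.isLt; simp; omega)
            have hn' : a (⟨n + 1 - 1, by omega⟩ : Fin (n + 2)) = ε * ((n : ℤ) + 1) := by
              rw [h2 ⟨n + 1 - 1, by omega⟩ (by show (1 : ℕ) ≤ n + 1 - 1; omega)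
                (by show n + 1 - 1 < n + 1; omega)]
              have : ((⟨n + 1 - 1, by omega⟩ : Fin (n + 2)) : ℕ) = n := by simp
              rw [this]
              push_cast
              ring
            rw [hkl, hlast, hn']
            have el : ((Fin.last (n + 1) : Fin (n + 2)) : ℕ) = n + 1 := rfl
            simp only [wO, el]
            rw [if_neg (by omega), if_neg (by omega)]
      have h0 := h1 0 (by simp only [Fin.val_zero]; omega)
      rcases h0 with h0 | h0 <;> rcases hε with rfl | rfl <;>
        rw [ha, h0] <;> simp [Set.mem_insert_iff]
    · -- j ≥ 2
      left
      have htail : Fin.tail a ∈ BOdd n := by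
        refine ⟨j - 1, by omega, by omega, ε, hε, fun k hk => ?_, fun k hk hk' => ?_, ?_⟩
        · exact h1 k.succ (by simp [Fin.val_succ]; omega)
        · have := h2 k.succ (by simp [Fin.val_succ]; omega) (by simp [Fin.val_succ]; omega)
          show a k.succ = _
          rw [this]
          have hc : ((j - 1 : ℕ) : ℤ) = (j : ℤ) - 1 := by
            push_cast [Nat.cast_sub hj1]
            ring
          rw [hc]
          simp only [Fin.val_succ]
          push_cast
          ring
        · split_ifs with hj2
          · rw [if_pos (by omega)] at hlast
            have e1 : (Fin.last n).succ = Fin.last (n + 1) := Fin.ext (by simp)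
            have e2 : (⟨n - 1, by omega⟩ : Fin (n + 1)).succ =
                (⟨n + 1 - 1, by omega⟩ : Fin (n + 2)) := Fin.ext (by simp; omega)
            show a (Fin.last n).succ = a (⟨n - 1, by omega⟩ : Fin (n + 1)).succ
            rw [e1, e2]
            exact hlast
          · rw [if_neg (by omega)] at hlast
            have e1 : (Fin.last n).succ = Fin.last (n + 1) := Fin.ext (by simp)
            show a (Fin.last n).succ = -1 ∨ a (Fin.last n).succ = 0 ∨ a (Fin.last n).succ = 1
            rw [e1]
            exact hlast
      have h0 := h1 0 (by simp only [Fin.val_zero]; omega)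
      rcases h0 with h0 | h0
      · left
        exact ⟨Fin.tail a, htail, by rw [← h0]; exact Fin.cons_self_tail a⟩
      · right
        exact ⟨Fin.tail a, htail, by rw [← h0]; exact Fin.cons_self_tail a⟩
  · rintro ((⟨b, hb, rfl⟩ | ⟨b, hb, rfl⟩) | h)
    · obtain ⟨j, hj1, hjn, ε, hε, h1, h2, hlast⟩ := hb
      refine ⟨j + 1, by omega, by omega, ε, hε, fun k hk => ?_, fun k hk hk' => ?_, ?_⟩
      · cases k using Fin.cases with
        | zero => simp [consZ]
        | succ i =>
          rw [consZ_succ]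
          exact h1 i (by simp [Fin.val_succ] at hk ⊢; omega)
      · cases k using Fin.cases with
        | zero => simp at hk
        | succ i =>
          rw [consZ_succ]
          rw [h2 i (by simp [Fin.val_succ] at hk; omega) (by simp [Fin.val_succ] at hk'; omega)]
          simp only [Fin.val_succ]
          push_cast
          ring
      · split_ifs with hj2
        · rw [if_pos (by omega)] at hlast
          have e1 : (Fin.last (n + 1)) = (Fin.last n).succ := Fin.ext (by simp)
          have e2 : (⟨n + 1 - 1, by omega⟩ : Fin (n + 2)) =
              (⟨n - 1, by omega⟩ : Fin (n + 1)).succ := Fin.ext (by simp; omega)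
          rw [e1, e2, consZ_succ, consZ_succ]
          exact hlast
        · rw [if_neg (by omega)] at hlast
          have e1 : (Fin.last (n + 1)) = (Fin.last n).succ := Fin.ext (by simp)
          rw [e1, consZ_succ]
          exact hlast
    · obtain ⟨j, hj1, hjn, ε, hε, h1, h2, hlast⟩ := hb
      refine ⟨j + 1, by omega, by omega, ε, hε, fun k hk => ?_, fun k hk hk' => ?_, ?_⟩
      · cases k using Fin.cases with
        | zero => simp [consZ]
        | succ i =>
          rw [consZ_succ]
          exact h1 i (by simp [Fin.val_succ] at hk ⊢; omega)
      · cases k using Fin.cases with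
        | zero => simp at hk
        | succ i =>
          rw [consZ_succ]
          rw [h2 i (by simp [Fin.val_succ] at hk; omega) (by simp [Fin.val_succ] at hk'; omega)]
          simp only [Fin.val_succ]
          push_cast
          ring
      · split_ifs with hj2
        · rw [if_pos (by omega)] at hlast
          have e1 : (Fin.last (n + 1)) = (Fin.last n).succ := Fin.ext (by simp)
          have e2 : (⟨n + 1 - 1, by omega⟩ : Fin (n + 2)) =
              (⟨n - 1, by omega⟩ : Fin (n + 1)).succ := Fin.ext (by simp; omega)
          rw [e1, e2, consZ_succ, consZ_succ]
          exact hlast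
        · rw [if_neg (by omega)] at hlast
          have e1 : (Fin.last (n + 1)) = (Fin.last n).succ := Fin.ext (by simp)
          rw [e1, consZ_succ]
          exact hlast
    · rcases h with rfl | rfl | rfl | rfl
      · exact wO_mem n hn (Or.inl rfl) (Or.inl rfl)
      · exact wO_mem n hn (Or.inl rfl) (Or.inr rfl)
      · exact wO_mem n hn (Or.inr rfl) (Or.inl rfl)
      · exact wO_mem n hn (Or.inr rfl) (Or.inr rfl)

lemma odd_step (n : ℕ) (hn : 1 ≤ n) (hfin : (BOdd n).Finite)
    (hcard : (BOdd n).ncard = 5 * 2 ^ n - 4) :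
    (BOdd (n + 1)).Finite ∧ (BOdd (n + 1)).ncard = 5 * 2 ^ (n + 1) - 4 := by
  have hp2 : 2 ≤ 2 ^ n := by
    calc 2 = 2 ^ 1 := rfl
    _ ≤ 2 ^ n := Nat.pow_le_pow_right (by norm_num) hn
  rw [BOdd_succ n hn]
  have hfin1 : (consZ (1 : ℤ) '' BOdd n ∪ consZ (-1 : ℤ) '' BOdd n).Finite :=
    (hfin.image _).union (hfin.image _)
  have hdisj1 : Disjoint (consZ (1 : ℤ) '' BOdd n) (consZ (-1 : ℤ) '' BOdd n) := by
    rw [Set.disjoint_left]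
    rintro a ⟨b, _, rfl⟩ ⟨c, _, hc⟩
    have := congrFun hc 0
    rw [consZ_zero, consZ_zero] at this
    norm_num at this
  have hdisj2 : Disjoint (consZ (1 : ℤ) '' BOdd n ∪ consZ (-1 : ℤ) '' BOdd n)
      ({wO n 1 1, wO n 1 (-1), wO n (-1) 1, wO n (-1) (-1)} : Set (Fin (n + 2) → ℤ)) := by
    rw [Set.disjoint_left]
    rintro a (⟨b, hb, rfl⟩ | ⟨b, hb, rfl⟩) hmem
    · have h2 := BOdd_second (x := 1) hb
      rcases hmem with h | h | h | h <;> rw [h, wO_one n hn] at h2 <;> omega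
    · have h2 := BOdd_second (x := -1) hb
      rcases hmem with h | h | h | h <;> rw [h, wO_one n hn] at h2 <;> omega
  have hT : ({wO n 1 1, wO n 1 (-1), wO n (-1) 1, wO n (-1) (-1)} :
      Set (Fin (n + 2) → ℤ)).ncard = 4 := by
    rw [Set.ncard_insert_of_notMem, Set.ncard_insert_of_notMem,
      Set.ncard_insert_of_notMem, Set.ncard_singleton]
    · intro h
      rw [Set.mem_singleton_iff] at h
      have := wO_inj hn h
      omega
    · intro h
      rcases h with h | h <;> · have := wO_inj hn h; omega
    · intro h
      rcases h with h | h | h <;> · have := wO_inj hn h; omega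
  constructor
  · exact hfin1.union (Set.toFinite _)
  · rw [Set.ncard_union_eq hdisj2 hfin1 (Set.toFinite _),
      Set.ncard_union_eq hdisj1 (hfin.image _) (hfin.image _),
      Set.ncard_image_of_injective _ (consZ_injective _),
      Set.ncard_image_of_injective _ (consZ_injective _), hcard, hT, pow_succ]
    omega

lemma key : ∀ n : ℕ, 1 ≤ n →
    ((BEven n).Finite ∧ (BEven n).ncard = 3 * 2 ^ n - 4) ∧
    ((BOdd n).Finite ∧ (BOdd n).ncard = 5 * 2 ^ n - 4) := by
  intro n hn
  induction n, hn using Nat.le_induction with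
  | base =>
    refine ⟨⟨?_, ?_⟩, ⟨?_, ?_⟩⟩
    · rw [BEven_one]; exact Set.toFinite _
    · rw [BEven_one]
      rw [Set.ncard_pair (by
        intro h
        have := congrFun h ⟨0, by norm_num⟩
        norm_num at this)]
      norm_num
    · rw [BOdd_one]; exact Set.toFinite _
    · rw [BOdd_one_card]; norm_num
  | succ m hm ih =>
    exact ⟨even_step m hm ih.1.1 ih.1.2, odd_step m hm ih.2.1 ih.2.2⟩

theorem stmt19 (n : ℕ) (hn : 1 ≤ n) :
    (BEven n).ncard = 3 * 2 ^ n - 4 ∧ (BOdd n).ncard = 5 * 2 ^ n - 4 :=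
  ⟨(key n hn).1.2, (key n hn).2.2⟩
end
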